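/- arXiv:math/0504164 — 9 statements merged into one kernel-verified Lean document; each statement's English description precedes it below -/
import Mathlib

section
/- For the Pascal triangle $a(n,k) = \binom{n}{k}$, and for any fixed $r \ge 0$, the sequence of polynomials $\mathscr{A}_r(n;q) = \sum_{k=r}^n \binom{n}{k} q^k$ (indexed by $n \ge r$) is $q$-log-concave: for all $n > r$, $\mathscr{A}_r(n;q)^2 - \mathscr{A}_r(n-1;q)\mathscr{A}_r(n+1;q)$ has nonnegative coefficients as a polynomial in $q$. -/
open Polynomial Finset

/-- The key binomial inequality: for `a < s` and `n ≥ 1`,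
`C(n,a)·C(n-1,s) ≤ C(n,s)·C(n-1,a)`. -/
lemma key_ineq (n a s : ℕ) (hn : 1 ≤ n) (h : a < s) :
    n.choose a * (n - 1).choose s ≤ n.choose s * (n - 1).choose a := by
  have h1 : ∀ k, (n - 1).choose k * n = n.choose k * (n - k) := by
    intro k
    have := Nat.choose_mul_succ_eq (n - 1) k
    rwa [Nat.sub_add_cancel hn] at this
  have key : (n.choose a * (n - 1).choose s) * n ≤ (n.choose s * (n - 1).choose a) * n := by
    calc (n.choose a * (n - 1).choose s) * n
        = n.choose a * ((n - 1).choose s * n) := by ring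
      _ = n.choose a * (n.choose s * (n - s)) := by rw [h1]
      _ ≤ n.choose s * (n.choose a * (n - a)) := by
          rw [show n.choose a * (n.choose s * (n - s)) = n.choose s * (n.choose a * (n - s)) by ring]
          exact Nat.mul_le_mul_left _ (Nat.mul_le_mul_left _ (Nat.sub_le_sub_left h.le n))
      _ = n.choose s * ((n - 1).choose a * n) := by rw [h1]
      _ = (n.choose s * (n - 1).choose a) * n := by ring
  exact Nat.le_of_mul_le_mul_right key hn

/-- Per-term Pascal identity over ℝ. -/
lemma per_term (n i j : ℕ) (hn : 1 ≤ n) (hi : 1 ≤ i) (hj : 1 ≤ j) :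
    (n.choose i : ℝ) * n.choose j - (n - 1).choose i * (n + 1).choose j
      = (n - 1).choose (i - 1) * n.choose j - (n - 1).choose i * n.choose (j - 1) := by
  obtain ⟨m, rfl⟩ : ∃ m, n = m + 1 := ⟨n - 1, by omega⟩
  obtain ⟨a, rfl⟩ : ∃ a, i = a + 1 := ⟨i - 1, by omega⟩
  obtain ⟨b, rfl⟩ : ∃ b, j = b + 1 := ⟨j - 1, by omega⟩
  simp only [Nat.add_sub_cancel, Nat.choose_succ_succ (m + 1), Nat.choose_succ_succ m]
  push_cast
  ring

lemma coeffA (r n i : ℕ) :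
    (∑ k ∈ Icc r n, Polynomial.C ((n.choose k : ℝ)) * X ^ k).coeff i
      = if r ≤ i then (n.choose i : ℝ) else 0 := by
  rw [finset_sum_coeff]
  simp only [coeff_C_mul, coeff_X_pow, mul_ite, mul_one, mul_zero]
  rw [Finset.sum_ite_eq (Icc r n) i (fun k => ((n.choose k : ℝ)))]
  by_cases h1 : r ≤ i
  · by_cases h2 : i ≤ n
    · simp [Finset.mem_Icc, h1, h2]
    · simp [Finset.mem_Icc, h1, h2, Nat.choose_eq_zero_of_lt (by omega : n < i)]
  · simp [Finset.mem_Icc, h1]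

lemma icc_zero (n : ℕ) : Icc 0 n = range (n + 1) := by
  ext x; simp [Nat.lt_succ_iff]

/-- For the Pascal triangle, for each fixed `r`, the sequence of
polynomials `𝒜_r(n;q) = ∑_{k=r}^n C(n,k) q^k` (for `n ≥ r`) is q-log-concave:
for all `n > r`, `𝒜_r(n)^2 - 𝒜_r(n-1) * 𝒜_r(n+1)` has nonnegative coefficients. -/
theorem stmt_3 (A : ℕ → ℕ → ℝ[X])
    (hA : ∀ r n : ℕ, A r n = ∑ k ∈ Icc r n, Polynomial.C ((n.choose k : ℝ)) * X ^ k) :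
    ∀ r n : ℕ, r + 1 ≤ n → ∀ t : ℕ,
      0 ≤ ((A r n) ^ 2 - A r (n - 1) * A r (n + 1)).coeff t := by
  intro r n hn t
  rcases Nat.eq_zero_or_pos r with hr | hr
  · -- r = 0 : A 0 m = (X+1)^m and the difference is identically zero
    subst hr
    have hpow : ∀ m : ℕ, A 0 m = (X + 1 : ℝ[X]) ^ m := by
      intro m
      rw [hA, icc_zero, add_pow]
      refine Finset.sum_congr rfl fun k _ => ?_
      rw [Polynomial.C_eq_natCast]
      ring
    have : (A 0 n) ^ 2 - A 0 (n - 1) * A 0 (n + 1) = 0 := by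
      rw [hpow, hpow, hpow, ← pow_add, ← pow_mul]
      rw [show n - 1 + (n + 1) = n * 2 by omega]
      ring
    simp [this]
  · -- r ≥ 1
    have hcoeff2 : ∀ m₁ m₂ : ℕ, (A r m₁ * A r m₂).coeff t
        = ∑ i ∈ range (t + 1),
            (if r ≤ i then (m₁.choose i : ℝ) else 0) *
            (if r ≤ t - i then (m₂.choose (t - i) : ℝ) else 0) := by
      intro m₁ m₂
      rw [Polynomial.coeff_mul, Finset.Nat.sum_antidiagonal_eq_sum_range_succ_mk]
      refine Finset.sum_congr rfl fun i _ => ?_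
      rw [hA, hA, coeffA, coeffA]
    have hD : ((A r n) ^ 2 - A r (n - 1) * A r (n + 1)).coeff t
        = ∑ i ∈ range (t + 1),
            (if r ≤ i ∧ r ≤ t - i then
              ((n.choose i : ℝ) * n.choose (t - i)
                - (n - 1).choose i * (n + 1).choose (t - i)) else 0) := by
      rw [Polynomial.coeff_sub, sq, hcoeff2, hcoeff2, ← Finset.sum_sub_distrib]
      refine Finset.sum_congr rfl fun i _ => ?_
      by_cases h1 : r ≤ i <;> by_cases h2 : r ≤ t - i <;> simp [h1, h2]
    rw [hD]
    rw [← Finset.sum_filter]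
    have hset : (range (t + 1)).filter (fun i => r ≤ i ∧ r ≤ t - i) = Icc r (t - r) := by
      ext i
      simp only [Finset.mem_filter, Finset.mem_range, Finset.mem_Icc]
      omega
    rw [hset]
    rcases lt_or_ge t (2 * r) with ht | ht
    · rw [Finset.Icc_eq_empty (by omega : ¬ r ≤ t - r), Finset.sum_empty]
    · -- rewrite each term as h(i-1) - h(i) with h i = C(n-1,i)·C(n,t-1-i)
      set h : ℕ → ℝ := fun i => ((n - 1).choose i : ℝ) * n.choose (t - 1 - i) with hh
      have hterm : ∀ i ∈ Icc r (t - r),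
          ((n.choose i : ℝ) * n.choose (t - i)
            - (n - 1).choose i * (n + 1).choose (t - i)) = h (i - 1) - h i := by
        intro i hi
        rw [Finset.mem_Icc] at hi
        have hi1 : 1 ≤ i := by omega
        have hj1 : 1 ≤ t - i := by omega
        rw [per_term n i (t - i) (by omega) hi1 hj1, hh]
        simp only
        rw [show t - 1 - (i - 1) = t - i by omega, show t - 1 - i = t - i - 1 by omega]
      rw [Finset.sum_congr rfl hterm]
      have hre : ∑ i ∈ Icc r (t - r), (h (i - 1) - h i)
          = ∑ k ∈ range (t - r + 1 - r), (h (r - 1 + k) - h (r - 1 + (k + 1))) := by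
        rw [← Finset.Ico_add_one_right_eq_Icc, Finset.sum_Ico_eq_sum_range]
        refine Finset.sum_congr rfl fun k _ => ?_
        rw [show r + k - 1 = r - 1 + k by omega, show r + k = r - 1 + (k + 1) by omega]
      rw [hre, Finset.sum_range_sub' (fun k => h (r - 1 + k))]
      rw [show r - 1 + 0 = r - 1 by omega, show r - 1 + (t - r + 1 - r) = t - r by omega]
      rw [hh]
      simp only
      rw [show t - 1 - (r - 1) = t - r by omega, show t - 1 - (t - r) = r - 1 by omega]
      rw [sub_nonneg]
      have := key_ineq n (r - 1) (t - r) (by omega) (by omega)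
      calc ((n - 1).choose (t - r) : ℝ) * n.choose (r - 1)
          = ((n.choose (r - 1) * (n - 1).choose (t - r) : ℕ) : ℝ) := by push_cast; ring
        _ ≤ ((n.choose (t - r) * (n - 1).choose (r - 1) : ℕ) : ℝ) := by exact_mod_cast this
        _ = ((n - 1).choose (r - 1) : ℝ) * n.choose (t - r) := by push_cast; ring
end

section
/- For the Pascal triangle, the identity $\mathscr{A}_r(n;q)^2 - \mathscr{A}_r(n-1;q)\mathscr{A}_r(n+1;q) = \sum_{k=r}^{n} \left[\binom{n-1}{r-1}\binom{n-1}{k-1} - \binom{n-1}{r-2}\binom{n-1}{k}\right] q^{k+r}$ holds for $1 \le r \le n$, where $\mathscr{A}_r(n;q) = \sum_{k=r}^n \binom{n}{k} q^k$, and each coefficient $\binom{n-1}{r-1}\binom{n-1}{k-1} - \binom{n-1}{r-2}\binom{n-1}{k}$ is nonnegative for $r \le k \le n$. -/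
open Polynomial Finset

noncomputable def ch (n : ℕ) (j : ℤ) : ℝ :=
  if 0 ≤ j then (n.choose j.toNat : ℝ) else 0

lemma ch_nonneg (n : ℕ) (j : ℤ) : 0 ≤ ch n j := by
  unfold ch; split <;> positivity

lemma ch_coe (m j : ℕ) : ch m (j : ℤ) = (m.choose j : ℝ) := by
  unfold ch
  rw [if_pos (by positivity)]
  simp

lemma ch_pascal (n : ℕ) (j : ℤ) : ch (n+1) j = ch n j + ch n (j-1) := by
  unfold ch
  rcases lt_trichotomy j 0 with h | h | h
  · rw [if_neg (by omega), if_neg (by omega), if_neg (by omega)]; ring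
  · subst h; norm_num
  · rw [if_pos (by omega), if_pos (by omega), if_pos (by omega)]
    obtain ⟨k, rfl⟩ : ∃ k : ℕ, j = (k : ℤ) + 1 := ⟨(j-1).toNat, by omega⟩
    rw [show ((k:ℤ)+1).toNat = k+1 by omega, show ((k:ℤ)+1-1).toNat = k by omega,
      Nat.choose_succ_succ]
    push_cast; ring

lemma cross (m a b : ℕ) (hab : a ≤ b) :
    m.choose a * m.choose (b+1) ≤ m.choose (a+1) * m.choose b := by
  have h1 := Nat.choose_succ_right_eq m a
  have h2 := Nat.choose_succ_right_eq m b
  have key : (m-b)*(a+1) ≤ (m-a)*(b+1) :=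
    Nat.mul_le_mul (Nat.sub_le_sub_left hab m) (by omega)
  have hpos : 0 < (a+1)*(b+1) := by positivity
  apply Nat.le_of_mul_le_mul_right _ hpos
  calc m.choose a * m.choose (b+1) * ((a+1)*(b+1))
      = m.choose a * (m.choose (b+1) * (b+1)) * (a+1) := by ring
    _ = m.choose a * (m.choose b * (m-b)) * (a+1) := by rw [h2]
    _ = m.choose a * m.choose b * ((m-b)*(a+1)) := by ring
    _ ≤ m.choose a * m.choose b * ((m-a)*(b+1)) := Nat.mul_le_mul_left _ key
    _ = (m.choose a * (m-a)) * m.choose b * (b+1) := by ring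
    _ = (m.choose (a+1) * (a+1)) * m.choose b * (b+1) := by rw [h1]
    _ = m.choose (a+1) * m.choose b * ((a+1)*(b+1)) := by ring

noncomputable def S (r n : ℕ) : ℝ[X] :=
  ∑ k ∈ Icc r n, Polynomial.C ((n.choose k : ℝ)) * X ^ k

lemma hSm (m r : ℕ) (hrm : r ≤ m + 1) :
    S r m = ∑ k ∈ Icc r (m+1), Polynomial.C ((m.choose k : ℝ)) * X ^ k := by
  unfold S
  rw [Finset.sum_Icc_succ_top hrm]
  simp [Nat.choose_succ_self]

lemma step2 (m r : ℕ) (hr : 1 ≤ r) (hrm : r ≤ m + 1) :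
    S r (m+1) = S r m + ∑ k ∈ Icc r (m+1), Polynomial.C ((m.choose (k-1) : ℝ)) * X ^ k := by
  rw [hSm m r hrm, ← Finset.sum_add_distrib]
  unfold S
  apply Finset.sum_congr rfl
  intro k hk
  simp only [Finset.mem_Icc] at hk
  obtain ⟨j, rfl⟩ : ∃ j, k = j + 1 := ⟨k - 1, by omega⟩
  rw [Nat.choose_succ_succ]
  simp only [Nat.succ_eq_add_one, Nat.add_sub_cancel]
  rw [show ((m.choose j + m.choose (j+1) : ℕ) : ℝ) = (m.choose j : ℝ) + (m.choose (j+1) : ℝ)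
    by push_cast; ring, map_add]
  ring

lemma step (m r : ℕ) (hr : 1 ≤ r) (hrm : r ≤ m + 1) :
    S r (m+1) = (1+X) * S r m + Polynomial.C ((m.choose (r-1) : ℝ)) * X ^ r := by
  rw [step2 m r hr hrm]
  have hT : ∑ k ∈ Icc r (m+1), Polynomial.C ((m.choose (k-1) : ℝ)) * X ^ k
      = Polynomial.C ((m.choose (r-1) : ℝ)) * X ^ r + X * S r m := by
    have hins : Icc r (m+1) = insert r (Icc (r+1) (m+1)) := by
      ext x; simp only [Finset.mem_Icc, Finset.mem_insert]; omega
    rw [hins, Finset.sum_insert (by simp)]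
    congr 1
    have himg : Icc (r+1) (m+1) = Finset.image (· + 1) (Icc r m) := by
      rw [Finset.image_add_right_Icc]
    rw [himg, Finset.sum_image (by intro a _ b _ h; simp only at h; omega)]
    unfold S
    rw [Finset.mul_sum]
    apply Finset.sum_congr rfl
    intro j _
    simp only [Nat.add_sub_cancel]
    ring
  rw [hT]
  ring

lemma key (m r : ℕ) (hr : 1 ≤ r) (hrm : r ≤ m + 1) :
    S r (m+1) ^ 2 - S r m * S r (m+2) =
      ∑ k ∈ Icc r (m+1),
        Polynomial.C ((m.choose (r-1) : ℝ) * (m.choose (k-1) : ℝ) -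
          ch m ((r:ℤ)-2) * (m.choose k : ℝ)) * X ^ (k + r) := by
  have h1 := step m r hr hrm
  have h2 := step (m+1) r hr (by omega)
  rw [show m+1+1 = m+2 from rfl] at h2
  have h3 : S r (m+1) ^ 2 - S r m * S r (m+2)
      = (Polynomial.C ((m.choose (r-1):ℝ)) * S r (m+1)
        - Polynomial.C (((m+1).choose (r-1):ℝ)) * S r m) * X ^ r := by
    rw [h2, pow_two]
    nth_rewrite 1 [h1]
    ring
  have hc : ((m+1).choose (r-1) : ℝ) = (m.choose (r-1) : ℝ) + ch m ((r:ℤ)-2) := by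
    have h := ch_pascal m (((r-1 : ℕ) : ℤ))
    rw [ch_coe, ch_coe] at h
    rw [show (r:ℤ)-2 = ((r-1:ℕ):ℤ)-1 by omega]
    exact h
  rw [h3, step2 m r hr hrm, hSm m r hrm, hc, map_add]
  simp only [mul_add, add_mul, Finset.mul_sum]
  rw [← Finset.sum_add_distrib, ← Finset.sum_sub_distrib, Finset.sum_mul]
  apply Finset.sum_congr rfl
  intro k _
  rw [map_sub, map_mul, map_mul, pow_add]
  ring

/-- For the Pascal triangle, with
`𝒜_r(n;q) = ∑_{k=r}^n C(n,k) q^k`, for `1 ≤ r ≤ n` one has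
`𝒜_r(n)^2 - 𝒜_r(n-1) 𝒜_r(n+1)
   = ∑_{k=r}^n [C(n-1,r-1)C(n-1,k-1) - C(n-1,r-2)C(n-1,k)] q^(k+r)`,
and each coefficient in the sum is nonnegative. -/
theorem stmt_4 (A : ℕ → ℕ → ℝ[X])
    (hA : ∀ r n : ℕ, A r n = ∑ k ∈ Icc r n, Polynomial.C ((n.choose k : ℝ)) * X ^ k)
    (r n : ℕ) (hr : 1 ≤ r) (hrn : r ≤ n) :
    (A r n) ^ 2 - A r (n - 1) * A r (n + 1) =
      ∑ k ∈ Icc r n,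
        Polynomial.C (ch (n - 1) ((r : ℤ) - 1) * ch (n - 1) ((k : ℤ) - 1) -
          ch (n - 1) ((r : ℤ) - 2) * ch (n - 1) (k : ℤ)) * X ^ (k + r) ∧
    ∀ k ∈ Icc r n,
      0 ≤ ch (n - 1) ((r : ℤ) - 1) * ch (n - 1) ((k : ℤ) - 1) -
          ch (n - 1) ((r : ℤ) - 2) * ch (n - 1) (k : ℤ) := by
  have hA' : ∀ r n, A r n = S r n := hA
  obtain ⟨m, rfl⟩ : ∃ m, n = m + 1 := ⟨n - 1, by omega⟩
  have hm : m + 1 - 1 = m := rfl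
  constructor
  · rw [hA', hA', hA', hm, key m r hr hrn]
    apply Finset.sum_congr rfl
    intro k hk
    simp only [Finset.mem_Icc] at hk
    congr 2
    rw [show (r:ℤ)-1 = ((r-1:ℕ):ℤ) by omega,
      show (k:ℤ)-1 = ((k-1:ℕ):ℤ) by omega, ch_coe, ch_coe, ch_coe]
  · intro k hk
    simp only [Finset.mem_Icc] at hk
    simp only [Nat.add_sub_cancel]
    rcases eq_or_lt_of_le hr with h1 | h1
    · rw [show (r:ℤ)-2 = -1 by omega, show ch m (-1) = 0 by unfold ch; norm_num]
      simp only [zero_mul, sub_zero]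
      exact mul_nonneg (ch_nonneg _ _) (ch_nonneg _ _)
    · have h2 : 2 ≤ r := h1
      rw [show (r:ℤ)-1 = ((r-1:ℕ):ℤ) by omega, show (k:ℤ)-1 = ((k-1:ℕ):ℤ) by omega,
        show (r:ℤ)-2 = ((r-2:ℕ):ℤ) by omega, ch_coe, ch_coe, ch_coe, ch_coe]
      rw [sub_nonneg]
      have := cross m (r-2) (k-1) (by omega)
      rw [show r-2+1 = r-1 by omega, show k-1+1 = k by omega] at this
      exact_mod_cast this
end

section
/- If the triangle $\{a(n,k)\}_{0 \le k \le n}$ of nonnegative reals is LC-positive, then for every log-concave sequence $\{x_k\}_{k \ge 0}$ of nonnegative reals, the sequence $z_n = \sum_{k=0}^n a(n,k) x_k$ is log-concave. -/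
open Polynomial Finset

/-- Theorem 1: LC-positive triangles are PLC: if the triangle
`{a n k}` of nonnegative reals is LC-positive, then for every nonnegative
log-concave sequence `x` (with no internal zeros), the sequence
`z n = ∑_{k=0}^n a n k * x k` is log-concave. -/
theorem stmt_5 (a : ℕ → ℕ → ℝ)
    (hanonneg : ∀ n k : ℕ, k ≤ n → 0 ≤ a n k)
    (ha0 : ∀ n k : ℕ, n < k → a n k = 0)
    (A : ℕ → ℕ → ℝ[X])
    (hA : ∀ r n : ℕ, A r n = ∑ k ∈ Icc r n, Polynomial.C (a n k) * X ^ k)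
    (hLC : ∀ r n : ℕ, 1 ≤ n → ∀ t : ℕ,
      0 ≤ ((A r n) ^ 2 - A r (n - 1) * A r (n + 1)).coeff t)
    (x : ℕ → ℝ)
    (hxnonneg : ∀ k, 0 ≤ x k)
    (hxlc : ∀ k : ℕ, x k * x (k + 2) ≤ x (k + 1) ^ 2)
    (hxniz : ∀ i j k : ℕ, i < j → j < k → x i ≠ 0 → x k ≠ 0 → x j ≠ 0)
    (z : ℕ → ℝ)
    (hz : ∀ n : ℕ, z n = ∑ k ∈ Finset.range (n + 1), a n k * x k) :
    ∀ n : ℕ, z n * z (n + 2) ≤ z (n + 1) ^ 2 := by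
  -- generalized log-concavity of x
  have key : ∀ m i : ℕ, x i * x (i + m + 2) ≤ x (i + 1) * x (i + m + 1) := by
    intro m
    induction m with
    | zero =>
      intro i
      show x i * x (i + 2) ≤ x (i + 1) * x (i + 1)
      nlinarith [hxlc i]
    | succ m ih =>
      intro i
      show x i * x (i + m + 3) ≤ x (i + 1) * x (i + m + 2)
      by_cases h1 : x (i + 1) = 0
      · have h0 : x i = 0 ∨ x (i + m + 3) = 0 := by
          by_contra h
          push_neg at h
          exact (hxniz i (i + 1) (i + m + 3) (by omega) (by omega) h.1 h.2) h1
        have hz0 : x i * x (i + m + 3) = 0 := by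
          rcases h0 with h | h <;> rw [h] <;> ring
        rw [hz0]
        exact mul_nonneg (hxnonneg _) (hxnonneg _)
      · by_cases h2 : x (i + 2) = 0
        · have h3 : x (i + m + 3) = 0 := by
            by_contra h
            exact (hxniz (i + 1) (i + 2) (i + m + 3) (by omega) (by omega) h1 h) h2
          rw [h3, mul_zero]
          exact mul_nonneg (hxnonneg _) (hxnonneg _)
        · have hc : 0 < x (i + 2) := (hxnonneg _).lt_of_ne (Ne.symm h2)
          have ih' : x (i + 1) * x (i + m + 3) ≤ x (i + 2) * x (i + m + 2) := by
            have h := ih (i + 1)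
            simpa [show i + 1 + m + 2 = i + m + 3 by omega,
              show i + 1 + m + 1 = i + m + 2 by omega,
              show i + 1 + 1 = i + 2 by omega] using h
          nlinarith [hxlc i, hxnonneg i, hxnonneg (i + m + 3), hxnonneg (i + 1),
            hxnonneg (i + m + 2),
            mul_le_mul_of_nonneg_right (hxlc i) (hxnonneg (i + m + 3)),
            mul_le_mul_of_nonneg_left ih' (hxnonneg (i + 1))]
  intro n
  rw [← sub_nonneg]
  set M := n + 3 with hMdef
  have hz' : ∀ m, m < M → z m = ∑ k ∈ range M, a m k * x k := by
    intro m hm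
    rw [hz m]
    apply Finset.sum_subset (Finset.range_subset_range.2 (by omega))
    intro k _ hk
    have hmk : m < k := by
      simp only [Finset.mem_range] at hk; omega
    rw [ha0 m k hmk, zero_mul]
  set d : ℕ → ℕ → ℝ :=
    fun t r => x r * x (t - r) - (if r = 0 then 0 else x (r - 1) * x (t - r + 1)) with hd
  -- telescoping
  have tele : ∀ t m : ℕ, m ≤ t → ∑ r ∈ range (m + 1), d t r = x m * x (t - m) := by
    intro t m
    induction m with
    | zero => intro _; simp [hd]
    | succ m ih =>
      intro hm
      rw [Finset.sum_range_succ, ih (by omega)]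
      have h1 : ¬ (m + 1 = 0) := by omega
      simp only [hd, if_neg h1]
      have e1 : m + 1 - 1 = m := by omega
      have e2 : t - (m + 1) + 1 = t - m := by omega
      rw [e1, e2]
      ring
  have xtele : ∀ k l : ℕ, x k * x l = ∑ r ∈ range (min k l + 1), d (k + l) r := by
    intro k l
    rw [tele (k + l) (min k l) (by omega)]
    rcases le_total k l with h | h
    · rw [min_eq_left h, show k + l - k = l by omega]
    · rw [min_eq_right h, show k + l - l = k by omega, mul_comm]
  -- coefficients of A
  have coeffA : ∀ r m j : ℕ, (A r m).coeff j = if r ≤ j then a m j else 0 := by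
    intro r m j
    rw [hA r m, Polynomial.finset_sum_coeff]
    simp only [Polynomial.coeff_C_mul, Polynomial.coeff_X_pow, mul_ite, mul_one, mul_zero]
    rw [Finset.sum_ite_eq (Icc r m) j (fun k => a m k)]
    by_cases hj : r ≤ j
    · by_cases hjm : j ≤ m
      · simp [Finset.mem_Icc, hj, hjm]
      · simp [Finset.mem_Icc, hj, hjm, ha0 m j (by omega)]
    · simp [Finset.mem_Icc, hj]
  set F : ℕ → ℕ → ℕ → ℝ := fun r k l =>
    if r ≤ k ∧ r ≤ l then (a (n + 1) k * a (n + 1) l - a n k * a (n + 2) l) * d (k + l) r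
    else 0 with hF
  have step1 : z (n + 1) ^ 2 - z n * z (n + 2) =
      ∑ k ∈ range M, ∑ l ∈ range M,
        (a (n + 1) k * a (n + 1) l - a n k * a (n + 2) l) * (x k * x l) := by
    rw [hz' (n + 1) (by omega), hz' n (by omega), hz' (n + 2) (by omega), sq,
      Finset.sum_mul_sum, Finset.sum_mul_sum, ← Finset.sum_sub_distrib]
    refine Finset.sum_congr rfl fun k _ => ?_
    rw [← Finset.sum_sub_distrib]
    exact Finset.sum_congr rfl fun l _ => by ring
  have step2 : ∑ k ∈ range M, ∑ l ∈ range M,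
        (a (n + 1) k * a (n + 1) l - a n k * a (n + 2) l) * (x k * x l) =
      ∑ k ∈ range M, ∑ l ∈ range M, ∑ r ∈ range M, F r k l := by
    refine Finset.sum_congr rfl fun k hk => Finset.sum_congr rfl fun l hl => ?_
    rw [xtele k l, Finset.mul_sum]
    have hmin : min k l + 1 ≤ M := by
      simp only [Finset.mem_range] at hk hl
      omega
    have hsub : range (min k l + 1) ⊆ range M := Finset.range_subset_range.2 hmin
    calc ∑ r ∈ range (min k l + 1),
          (a (n + 1) k * a (n + 1) l - a n k * a (n + 2) l) * d (k + l) r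
        = ∑ r ∈ range (min k l + 1), F r k l := by
          refine Finset.sum_congr rfl fun r hr => ?_
          have hrm : r ≤ k ∧ r ≤ l := by
            simp only [Finset.mem_range] at hr
            omega
          simp only [hF]
          rw [if_pos hrm]
      _ = ∑ r ∈ range M, F r k l := by
          apply Finset.sum_subset hsub
          intro r _ hr
          have : ¬ (r ≤ k ∧ r ≤ l) := by
            simp only [Finset.mem_range] at hr
            omega
          simp only [hF]
          rw [if_neg this]
  have step3 : ∑ k ∈ range M, ∑ l ∈ range M, ∑ r ∈ range M, F r k l =
      ∑ r ∈ range M, ∑ k ∈ range M, ∑ l ∈ range M, F r k l := by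
    rw [show (∑ k ∈ range M, ∑ l ∈ range M, ∑ r ∈ range M, F r k l)
        = ∑ k ∈ range M, ∑ r ∈ range M, ∑ l ∈ range M, F r k l from
      Finset.sum_congr rfl fun k _ => Finset.sum_comm]
    exact Finset.sum_comm
  have inner : ∀ r : ℕ, ∑ k ∈ range M, ∑ l ∈ range M, F r k l =
      ∑ t ∈ range (2 * M),
        ((A r (n + 1)) ^ 2 - A r n * A r (n + 2)).coeff t * d t r := by
    intro r
    have hFzero : ∀ p : ℕ × ℕ, M ≤ p.1 ∨ M ≤ p.2 → F r p.1 p.2 = 0 := by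
      intro p hp
      have hm : a (n + 1) p.1 * a (n + 1) p.2 - a n p.1 * a (n + 2) p.2 = 0 := by
        rcases hp with h | h
        · rw [ha0 (n + 1) p.1 (by omega), ha0 n p.1 (by omega)]; ring
        · rw [ha0 (n + 1) p.2 (by omega), ha0 (n + 2) p.2 (by omega)]; ring
      simp only [hF]
      split_ifs with h
      · rw [hm, zero_mul]
      · rfl
    have hdisj : (↑(range (2 * M)) : Set ℕ).PairwiseDisjoint
        (fun t => (Finset.HasAntidiagonal.antidiagonal t : Finset (ℕ × ℕ))) := by
      intro t1 _ t2 _ hne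
      simp only [Function.onFun, Finset.disjoint_left]
      intro p hp1 hp2
      rw [Finset.HasAntidiagonal.mem_antidiagonal] at hp1 hp2
      exact hne (hp1 ▸ hp2 ▸ rfl)
    calc ∑ k ∈ range M, ∑ l ∈ range M, F r k l
        = ∑ p ∈ range M ×ˢ range M, F r p.1 p.2 := (Finset.sum_product' _ _ _).symm
      _ = ∑ p ∈ (range (2 * M)).biUnion (fun t => Finset.HasAntidiagonal.antidiagonal t), F r p.1 p.2 := by
          apply Finset.sum_subset
          · intro p hp
            rw [Finset.mem_product] at hp
            rw [Finset.mem_range] at hp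
            -- hp : p.1 ∈ range M ∧ p.2 ∈ range M
            rw [Finset.mem_biUnion]
            refine ⟨p.1 + p.2, Finset.mem_range.2 ?_, Finset.HasAntidiagonal.mem_antidiagonal.2 rfl⟩
            have h1 : p.1 < M := by
              have := hp.1
              simpa using this
            have h2 : p.2 < M := by
              have := hp.2
              simpa using this
            omega
          · intro p _ hnp
            apply hFzero
            by_contra h
            push_neg at h
            exact hnp (Finset.mem_product.2
              ⟨Finset.mem_range.2 (by omega), Finset.mem_range.2 (by omega)⟩)
      _ = ∑ t ∈ range (2 * M), ∑ p ∈ Finset.HasAntidiagonal.antidiagonal t, F r p.1 p.2 :=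
          Finset.sum_biUnion hdisj
      _ = ∑ t ∈ range (2 * M),
            ((A r (n + 1)) ^ 2 - A r n * A r (n + 2)).coeff t * d t r := by
          refine Finset.sum_congr rfl fun t _ => ?_
          have hcoeff : ((A r (n + 1)) ^ 2 - A r n * A r (n + 2)).coeff t =
              ∑ p ∈ Finset.HasAntidiagonal.antidiagonal t,
                ((if r ≤ p.1 then a (n + 1) p.1 else 0) *
                  (if r ≤ p.2 then a (n + 1) p.2 else 0) -
                 (if r ≤ p.1 then a n p.1 else 0) *
                  (if r ≤ p.2 then a (n + 2) p.2 else 0)) := by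
            rw [Polynomial.coeff_sub, sq, Polynomial.coeff_mul, Polynomial.coeff_mul,
              ← Finset.sum_sub_distrib]
            refine Finset.sum_congr rfl fun p _ => ?_
            rw [coeffA, coeffA, coeffA, coeffA]
          rw [hcoeff, Finset.sum_mul]
          refine Finset.sum_congr rfl fun p hp => ?_
          have hpt : p.1 + p.2 = t := Finset.HasAntidiagonal.mem_antidiagonal.1 hp
          simp only [hF]
          by_cases h1 : r ≤ p.1 <;> by_cases h2 : r ≤ p.2 <;>
            simp [h1, h2, hpt]
  have main : z (n + 1) ^ 2 - z n * z (n + 2) =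
      ∑ r ∈ range M, ∑ t ∈ range (2 * M),
        ((A r (n + 1)) ^ 2 - A r n * A r (n + 2)).coeff t * d t r :=
    step1.trans (step2.trans (step3.trans (Finset.sum_congr rfl fun r _ => inner r)))
  rw [main]
  apply Finset.sum_nonneg
  intro r _
  apply Finset.sum_nonneg
  intro t _
  by_cases hrt : 2 * r ≤ t
  · have hcn : 0 ≤ ((A r (n + 1)) ^ 2 - A r n * A r (n + 2)).coeff t := by
      have h := hLC r (n + 1) (by omega) t
      simpa using h
    have hdn : 0 ≤ d t r := by
      rcases Nat.eq_zero_or_pos r with h | h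
      · simp only [hd, h, if_pos rfl, sub_zero]
        simpa using mul_nonneg (hxnonneg 0) (hxnonneg t)
      · have hk := key (t - 2 * r) (r - 1)
        rw [show r - 1 + (t - 2 * r) + 2 = t - r + 1 by omega,
          show r - 1 + (t - 2 * r) + 1 = t - r by omega,
          show r - 1 + 1 = r by omega] at hk
        simp only [hd, if_neg (by omega : ¬ r = 0)]
        linarith
    exact mul_nonneg hcn hdn
  · have hc0 : ((A r (n + 1)) ^ 2 - A r n * A r (n + 2)).coeff t = 0 := by
      rw [Polynomial.coeff_sub, sq, Polynomial.coeff_mul, Polynomial.coeff_mul,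
        ← Finset.sum_sub_distrib]
      apply Finset.sum_eq_zero
      intro p hp
      have hpt : p.1 + p.2 = t := Finset.HasAntidiagonal.mem_antidiagonal.1 hp
      rw [coeffA, coeffA, coeffA, coeffA]
      have : p.1 < r ∨ p.2 < r := by omega
      rcases this with h | h
      · simp [show ¬ r ≤ p.1 by omega]
      · simp [show ¬ r ≤ p.2 by omega]
    rw [hc0, zero_mul]
end

section
/- Let $\{a(n,k)\}_{0 \le k \le n}$ be a double LC-positive triangle of nonnegative reals and $\{y_k\}_{k \ge 0}$ a log-concave sequence of nonnegative reals with no internal zeros. Then the triangle $c(n,k) = a(n,k)y_{n-k}$ is LC-positive, and $C_r(n,t) \ge A_r(n,t)\, y_{n-t+r}\, y_{n-r}$ for all $2r \le t \le \min(2n, n+r)$. -/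
open Polynomial Finset

private lemma ite_prod_eq (p q : Prop) [Decidable p] [Decidable q] (x z : ℝ)
    (hx : ¬p → x = 0) (hz : ¬q → z = 0) :
    (if p then x else 0) * (if q then z else 0) = x * z := by
  split_ifs <;> simp_all

private lemma ylc_step (y : ℕ → ℝ) (hynonneg : ∀ k, 0 ≤ y k)
    (hylc : ∀ k : ℕ, y k * y (k + 2) ≤ y (k + 1) ^ 2)
    (hyniz : ∀ i j k : ℕ, i < j → j < k → y i ≠ 0 → y k ≠ 0 → y j ≠ 0) :
    ∀ b a : ℕ, a ≤ b → y a * y (b + 1) ≤ y (a + 1) * y b := by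
  intro b
  induction b with
  | zero =>
      intro a ha
      have : a = 0 := Nat.le_zero.mp ha
      subst this; rw [mul_comm]
  | succ b ih =>
      intro a ha
      rcases eq_or_lt_of_le ha with rfl | h
      · rw [mul_comm]
      · have hab : a ≤ b := by omega
        by_cases hb1 : y (b + 1) = 0
        · have h0 : y a = 0 ∨ y (b + 2) = 0 := by
            by_contra hc
            push_neg at hc
            exact hyniz a (b + 1) (b + 2) (by omega) (by omega) hc.1 hc.2 hb1
          have hnn : 0 ≤ y (a + 1) * y (b + 1) := mul_nonneg (hynonneg _) (hynonneg _)
          rcases h0 with h0 | h0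
          · rw [show b + 1 + 1 = b + 2 from rfl, h0, zero_mul]; exact hnn
          · rw [show b + 1 + 1 = b + 2 from rfl, h0, mul_zero]; exact hnn
        · have hpos : 0 < y (b + 1) := lt_of_le_of_ne (hynonneg _) (Ne.symm hb1)
          have h1 := ih a hab
          have h2 := hylc b
          have h3 : y a * y (b + 2) * y (b + 1) ≤ y (a + 1) * y (b + 1) * y (b + 1) := by
            nlinarith [mul_le_mul_of_nonneg_right h1 (hynonneg (b + 2)),
              mul_le_mul_of_nonneg_left h2 (hynonneg (a + 1))]
          exact le_of_mul_le_mul_right h3 hpos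

private lemma abel_sum (u Y : ℕ → ℝ) (t R : ℕ)
    (hW : ∀ s, R ≤ s → 0 ≤ ∑ i ∈ Icc s (t - s), u i)
    (hmono : ∀ s, R ≤ s → 2 * s + 1 ≤ t → Y s ≤ Y (s + 1))
    (hsym : ∀ s, R ≤ s → 2 * s ≤ t → Y (t - s) = Y s) :
    Y R * ∑ i ∈ Icc R (t - R), u i ≤ ∑ i ∈ Icc R (t - R), u i * Y i := by
  suffices h : ∀ k s, R ≤ s → t ≤ 2 * s + k →
      Y s * ∑ i ∈ Icc s (t - s), u i ≤ ∑ i ∈ Icc s (t - s), u i * Y i by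
    exact h t R le_rfl (by omega)
  intro k
  induction k with
  | zero =>
      intro s hs hts
      rcases Nat.lt_or_ge (t - s) s with h | h
      · rw [Finset.Icc_eq_empty (by omega)]; simp
      · have hts' : t - s = s := by omega
        rw [hts', Finset.Icc_self, Finset.sum_singleton, Finset.sum_singleton, mul_comm]
  | succ k ih =>
      intro s hs hts
      rcases le_or_gt t (2 * s + k) with h | h
      · exact ih s hs h
      · have ht : 2 * s < t := by omega
        have hset : Icc s (t - s) = insert s (insert (t - s) (Icc (s + 1) (t - (s + 1)))) := by
          ext x; simp only [Finset.mem_Icc, Finset.mem_insert]; omega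
        have hns : s ∉ insert (t - s) (Icc (s + 1) (t - (s + 1))) := by
          simp only [Finset.mem_insert, Finset.mem_Icc]; omega
        have hnts : t - s ∉ Icc (s + 1) (t - (s + 1)) := by
          simp only [Finset.mem_Icc]; omega
        rw [hset, Finset.sum_insert hns, Finset.sum_insert hnts, Finset.sum_insert hns,
          Finset.sum_insert hnts]
        have hIH := ih (s + 1) (by omega) (by omega)
        have hW1 := hW (s + 1) (by omega)
        have hm := hmono s hs (by omega)
        have hY := hsym s hs (by omega)
        have h1 : Y s * ∑ i ∈ Icc (s + 1) (t - (s + 1)), u i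
            ≤ Y (s + 1) * ∑ i ∈ Icc (s + 1) (t - (s + 1)), u i :=
          mul_le_mul_of_nonneg_right hm hW1
        rw [hY]
        nlinarith [hIH, h1]

private lemma coeff_sumCX (f : ℕ → ℝ) (lo hi j : ℕ) :
    (∑ k ∈ Icc lo hi, Polynomial.C (f k) * X ^ k).coeff j = if j ∈ Icc lo hi then f j else 0 := by
  rw [Polynomial.finset_sum_coeff]
  simp only [Polynomial.coeff_C_mul, Polynomial.coeff_X_pow, mul_ite, mul_one, mul_zero]
  exact Finset.sum_ite_eq (Icc lo hi) j f

private lemma coeff_mul_sumCX (f g : ℕ → ℝ) (l1 h1 l2 h2 t : ℕ) :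
    ((∑ k ∈ Icc l1 h1, Polynomial.C (f k) * X ^ k) *
        (∑ k ∈ Icc l2 h2, Polynomial.C (g k) * X ^ k)).coeff t
      = ∑ i ∈ range (t + 1),
          (if i ∈ Icc l1 h1 then f i else 0) * (if t - i ∈ Icc l2 h2 then g (t - i) else 0) := by
  rw [Polynomial.coeff_mul, Finset.Nat.sum_antidiagonal_eq_sum_range_succ_mk]
  simp only [coeff_sumCX]

private lemma coeff_diff_eq (f1 g1 f2 g2 : ℕ → ℝ) (l1 h1 l2 h2 l3 h3 l4 h4 t : ℕ)
    (G : ℕ → ℝ) (r m : ℕ)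
    (hsub : Icc r m ⊆ range (t + 1))
    (hterm : ∀ i, i ≤ t →
      (if i ∈ Icc l1 h1 then f1 i else 0) * (if t - i ∈ Icc l2 h2 then g1 (t - i) else 0)
        - (if i ∈ Icc l3 h3 then f2 i else 0) * (if t - i ∈ Icc l4 h4 then g2 (t - i) else 0)
      = if i ∈ Icc r m then G i else 0) :
    ((∑ k ∈ Icc l1 h1, Polynomial.C (f1 k) * X ^ k) *
        (∑ k ∈ Icc l2 h2, Polynomial.C (g1 k) * X ^ k)
      - (∑ k ∈ Icc l3 h3, Polynomial.C (f2 k) * X ^ k) *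
        (∑ k ∈ Icc l4 h4, Polynomial.C (g2 k) * X ^ k)).coeff t
      = ∑ i ∈ Icc r m, G i := by
  rw [Polynomial.coeff_sub, coeff_mul_sumCX, coeff_mul_sumCX, ← Finset.sum_sub_distrib]
  rw [Finset.sum_congr rfl fun i hi => hterm i (by
    have := Finset.mem_range.mp hi; omega)]
  rw [Finset.sum_ite_mem, Finset.inter_eq_right.mpr hsub]

private lemma astar_window (a : ℕ → ℕ → ℝ) (ha0 : ∀ n k : ℕ, n < k → a n k = 0)
    (n t r' : ℕ) (hn : 1 ≤ n) (hr' : r' ≤ n) (ht : t ≤ 2 * n) :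
    ((∑ k ∈ Icc r' n, Polynomial.C (a n (n - k)) * X ^ k) ^ 2
        - (∑ k ∈ Icc r' (n - 1), Polynomial.C (a (n - 1) (n - 1 - k)) * X ^ k) *
          (∑ k ∈ Icc r' (n + 1), Polynomial.C (a (n + 1) (n + 1 - k)) * X ^ k)).coeff (2 * n - t)
      = ∑ i ∈ Icc (t + r' - n) (n - r'),
          ((if i ≤ t then a n i * a n (t - i) else 0) -
            (if 1 ≤ i ∧ i ≤ t + 1 then a (n - 1) (i - 1) * a (n + 1) (t + 1 - i) else 0)) := by
  rw [pow_two, Polynomial.coeff_sub, coeff_mul_sumCX, coeff_mul_sumCX, ← Finset.sum_sub_distrib]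
  have hterm : ∀ k ∈ range (2 * n - t + 1),
      ((if k ∈ Icc r' n then a n (n - k) else 0) *
          (if 2 * n - t - k ∈ Icc r' n then a n (n - (2 * n - t - k)) else 0)
        - (if k ∈ Icc r' (n - 1) then a (n - 1) (n - 1 - k) else 0) *
          (if 2 * n - t - k ∈ Icc r' (n + 1) then a (n + 1) (n + 1 - (2 * n - t - k)) else 0))
      = if k ∈ Icc r' (min (2 * n - t - r') n) then
          ((if n - k ≤ t then a n (n - k) * a n (t - (n - k)) else 0) -
            (if 1 ≤ n - k ∧ n - k ≤ t + 1 then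
              a (n - 1) (n - k - 1) * a (n + 1) (t + 1 - (n - k)) else 0)) else 0 := by
    intro k hk
    rw [mem_range] at hk
    by_cases hmem : k ∈ Icc r' (min (2 * n - t - r') n)
    · rw [if_pos hmem]; rw [mem_Icc] at hmem
      have hk1 : r' ≤ k := hmem.1
      have hk2 : k ≤ 2 * n - t - r' := by omega
      have hk3 : k ≤ n := by omega
      have p1 : (if k ∈ Icc r' n then a n (n - k) else 0) *
          (if 2 * n - t - k ∈ Icc r' n then a n (n - (2 * n - t - k)) else 0)
          = (if n - k ≤ t then a n (n - k) * a n (t - (n - k)) else 0) := by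
        rw [if_pos (mem_Icc.mpr ⟨hk1, hk3⟩)]
        by_cases hit : n - k ≤ t
        · rw [if_pos (mem_Icc.mpr ⟨by omega, by omega⟩), if_pos hit,
            show n - (2 * n - t - k) = t - (n - k) from by omega]
        · rw [if_neg (by rw [mem_Icc]; omega), if_neg hit, mul_zero]
      have p2 : (if k ∈ Icc r' (n - 1) then a (n - 1) (n - 1 - k) else 0) *
          (if 2 * n - t - k ∈ Icc r' (n + 1) then a (n + 1) (n + 1 - (2 * n - t - k)) else 0)
          = (if 1 ≤ n - k ∧ n - k ≤ t + 1 then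
              a (n - 1) (n - k - 1) * a (n + 1) (t + 1 - (n - k)) else 0) := by
        by_cases hc : 1 ≤ n - k ∧ n - k ≤ t + 1
        · rw [if_pos (mem_Icc.mpr ⟨hk1, by omega⟩), if_pos (mem_Icc.mpr ⟨by omega, by omega⟩),
            if_pos hc, show n - 1 - k = n - k - 1 from by omega,
            show n + 1 - (2 * n - t - k) = t + 1 - (n - k) from by omega]
        · rw [if_neg hc]
          by_cases hc1 : 1 ≤ n - k
          · rw [if_neg (show ¬(2 * n - t - k ∈ Icc r' (n + 1)) by rw [mem_Icc]; omega), mul_zero]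
          · rw [if_neg (show ¬(k ∈ Icc r' (n - 1)) by rw [mem_Icc]; omega), zero_mul]
      rw [p1, p2]
    · rw [if_neg hmem]; rw [mem_Icc] at hmem
      by_cases hk1 : r' ≤ k
      · by_cases hk3 : k ≤ n
        · rw [if_neg (show ¬(2 * n - t - k ∈ Icc r' n) by rw [mem_Icc]; omega),
            if_neg (show ¬(2 * n - t - k ∈ Icc r' (n + 1)) by rw [mem_Icc]; omega),
            mul_zero, mul_zero, sub_zero]
        · rw [if_neg (show ¬(k ∈ Icc r' n) by rw [mem_Icc]; omega),
            if_neg (show ¬(k ∈ Icc r' (n - 1)) by rw [mem_Icc]; omega),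
            zero_mul, zero_mul, sub_zero]
      · rw [if_neg (show ¬(k ∈ Icc r' n) by rw [mem_Icc]; omega),
          if_neg (show ¬(k ∈ Icc r' (n - 1)) by rw [mem_Icc]; omega),
          zero_mul, zero_mul, sub_zero]
  rw [Finset.sum_congr rfl hterm, Finset.sum_ite_mem,
    Finset.inter_eq_right.mpr (by
      intro x hx; rw [mem_Icc] at hx; rw [mem_range]; omega)]
  refine Finset.sum_nbij' (fun k => n - k) (fun i => n - i) ?_ ?_ ?_ ?_ ?_
  · intro x hx; rw [mem_Icc] at hx ⊢; omega
  · intro x hx; rw [mem_Icc] at hx ⊢; omega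
  · intro x hx; rw [mem_Icc] at hx; omega
  · intro x hx; rw [mem_Icc] at hx; omega
  · intro x hx; rfl

/-- Proposition 2.4 (ii): if `{a n k}` is double LC-positive and
`y` is a nonnegative log-concave sequence (no internal zeros), then
`c n k = a n k * y (n-k)` is LC-positive, and
`C_r(n,t) ≥ A_r(n,t) * y (n-t+r) * y (n-r)` for `2r ≤ t ≤ min(2n, n+r)`. -/
theorem stmt_8 (a : ℕ → ℕ → ℝ)
    (hanonneg : ∀ n k : ℕ, k ≤ n → 0 ≤ a n k)
    (ha0 : ∀ n k : ℕ, n < k → a n k = 0)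
    (y : ℕ → ℝ)
    (hynonneg : ∀ k, 0 ≤ y k)
    (hylc : ∀ k : ℕ, y k * y (k + 2) ≤ y (k + 1) ^ 2)
    (hyniz : ∀ i j k : ℕ, i < j → j < k → y i ≠ 0 → y k ≠ 0 → y j ≠ 0)
    (A Astar C : ℕ → ℕ → ℝ[X])
    (hA : ∀ r n : ℕ, A r n = ∑ k ∈ Icc r n, Polynomial.C (a n k) * X ^ k)
    (hAstar : ∀ r n : ℕ, Astar r n = ∑ k ∈ Icc r n, Polynomial.C (a n (n - k)) * X ^ k)
    (hC : ∀ r n : ℕ, C r n = ∑ k ∈ Icc r n, Polynomial.C (a n k * y (n - k)) * X ^ k)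
    (hLC : ∀ r n : ℕ, 1 ≤ n → ∀ t : ℕ,
      0 ≤ ((A r n) ^ 2 - A r (n - 1) * A r (n + 1)).coeff t)
    (hLCstar : ∀ r n : ℕ, 1 ≤ n → ∀ t : ℕ,
      0 ≤ ((Astar r n) ^ 2 - Astar r (n - 1) * Astar r (n + 1)).coeff t) :
    ∀ r n t : ℕ, 1 ≤ n →
      (0 ≤ ((C r n) ^ 2 - C r (n - 1) * C r (n + 1)).coeff t) ∧
      (2 * r ≤ t → t ≤ 2 * n → t ≤ n + r →
        ((A r n) ^ 2 - A r (n - 1) * A r (n + 1)).coeff t *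
            (y (n + r - t) * y (n - r)) ≤
          ((C r n) ^ 2 - C r (n - 1) * C r (n + 1)).coeff t) := by
  intro r n t hn
  set P : ℕ → ℝ := fun i => a n i * a n (t - i) with hP
  set Q : ℕ → ℝ := fun i => a (n - 1) i * a (n + 1) (t - i) with hQ
  set qq : ℕ → ℝ := fun i =>
    if 1 ≤ i ∧ i ≤ t + 1 then a (n - 1) (i - 1) * a (n + 1) (t + 1 - i) else 0 with hqq
  set U : ℕ → ℝ := fun i => (if i ≤ t then a n i * a n (t - i) else 0) - qq i with hU
  set Y : ℕ → ℝ := fun j => y (n - j) * y (n + j - t) with hYdef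
  have hYnn : ∀ j, 0 ≤ Y j := fun j => mul_nonneg (hynonneg _) (hynonneg _)
  -- U vanishes outside the support window
  have hUzero : ∀ i, n < i ∨ n + i < t → U i = 0 := by
    intro i hi
    simp only [hU, hqq]
    rcases hi with hi | hi
    · have e1 : (if i ≤ t then a n i * a n (t - i) else 0) = 0 := by
        split_ifs with h1
        · rw [ha0 n i (by omega), zero_mul]
        · rfl
      have e2 : (if 1 ≤ i ∧ i ≤ t + 1 then a (n - 1) (i - 1) * a (n + 1) (t + 1 - i) else 0)
          = 0 := by
        split_ifs with h1
        · rw [ha0 (n - 1) (i - 1) (by omega), zero_mul]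
        · rfl
      rw [e1, e2, sub_zero]
    · have e1 : (if i ≤ t then a n i * a n (t - i) else 0) = 0 := by
        split_ifs with h1
        · rw [ha0 n (t - i) (by omega), mul_zero]
        · rfl
      have e2 : (if 1 ≤ i ∧ i ≤ t + 1 then a (n - 1) (i - 1) * a (n + 1) (t + 1 - i) else 0)
          = 0 := by
        split_ifs with h1
        · rw [ha0 (n + 1) (t + 1 - i) (by omega), mul_zero]
        · rfl
      rw [e1, e2, sub_zero]
  -- window positivity for U
  have hwin : ∀ s : ℕ, 0 ≤ ∑ i ∈ Icc s (t - s), U i := by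
    intro s
    by_cases ht2n : t ≤ 2 * n
    · by_cases hst : s ≤ t
      · have hs1t : max s (t - n) ≤ t := by omega
        have hshrink : ∑ i ∈ Icc s (t - s), U i
            = ∑ i ∈ Icc (max s (t - n)) (t - max s (t - n)), U i := by
          symm
          apply Finset.sum_subset
          · intro i hi; simp only [mem_Icc] at hi ⊢; omega
          · intro i hi hni
            simp only [mem_Icc] at hi hni
            exact hUzero i (by omega)
        rw [hshrink]
        have h0 := hLCstar (n - (t - max s (t - n))) n hn (2 * n - t)
        rw [hAstar, hAstar, hAstar,
          astar_window a ha0 n t (n - (t - max s (t - n))) hn (by omega) ht2n] at h0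
        have e1 : t + (n - (t - max s (t - n))) - n = max s (t - n) := by omega
        have e2 : n - (n - (t - max s (t - n))) = t - max s (t - n) := by omega
        rw [e1, e2] at h0
        simpa only [hU, hqq] using h0
      · rw [Finset.Icc_eq_empty (by omega), Finset.sum_empty]
    · have : ∀ i ∈ Icc s (t - s), U i = 0 := by
        intro i _
        exact hUzero i (by omega)
      rw [Finset.sum_eq_zero this]
  -- coefficient identities
  have hCt : ((C r n) ^ 2 - C r (n - 1) * C r (n + 1)).coeff t
      = ∑ i ∈ Icc r (t - r), (P i * Y i - Q i * Y (i + 1)) := by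
    rw [hC r n, hC r (n - 1), hC r (n + 1), pow_two]
    refine coeff_diff_eq _ _ _ _ r n r n r (n - 1) r (n + 1) t _ r (t - r) ?_ ?_
    · intro x hx; rw [mem_Icc] at hx; rw [mem_range]; omega
    · intro i hit
      by_cases hmem : i ∈ Icc r (t - r)
      · rw [if_pos hmem]; rw [mem_Icc] at hmem
        rw [ite_prod_eq _ _ _ _
            (fun h => by rw [mem_Icc] at h; rw [ha0 n i (by omega), zero_mul])
            (fun h => by rw [mem_Icc] at h; rw [ha0 n (t - i) (by omega), zero_mul]),
          ite_prod_eq _ _ _ _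
            (fun h => by rw [mem_Icc] at h; rw [ha0 (n - 1) i (by omega), zero_mul])
            (fun h => by rw [mem_Icc] at h; rw [ha0 (n + 1) (t - i) (by omega), zero_mul])]
        simp only [hP, hQ, hYdef]
        rw [show n - (t - i) = n + i - t from by omega,
          show n - 1 - i = n - (i + 1) from by omega,
          show n + 1 - (t - i) = n + (i + 1) - t from by omega]
        ring
      · rw [if_neg hmem]; rw [mem_Icc] at hmem
        by_cases hri : r ≤ i
        · rw [if_neg (show ¬(t - i ∈ Icc r n) by rw [mem_Icc]; omega),
            if_neg (show ¬(t - i ∈ Icc r (n + 1)) by rw [mem_Icc]; omega),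
            mul_zero, mul_zero, sub_zero]
        · rw [if_neg (show ¬(i ∈ Icc r n) by rw [mem_Icc]; omega),
            if_neg (show ¬(i ∈ Icc r (n - 1)) by rw [mem_Icc]; omega),
            zero_mul, zero_mul, sub_zero]
  have hAt : ((A r n) ^ 2 - A r (n - 1) * A r (n + 1)).coeff t
      = ∑ i ∈ Icc r (t - r), (P i - Q i) := by
    rw [hA r n, hA r (n - 1), hA r (n + 1), pow_two]
    refine coeff_diff_eq _ _ _ _ r n r n r (n - 1) r (n + 1) t _ r (t - r) ?_ ?_
    · intro x hx; rw [mem_Icc] at hx; rw [mem_range]; omega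
    · intro i hit
      by_cases hmem : i ∈ Icc r (t - r)
      · rw [if_pos hmem]; rw [mem_Icc] at hmem
        rw [ite_prod_eq _ _ _ _
            (fun h => by rw [mem_Icc] at h; exact ha0 n i (by omega))
            (fun h => by rw [mem_Icc] at h; exact ha0 n (t - i) (by omega)),
          ite_prod_eq _ _ _ _
            (fun h => by rw [mem_Icc] at h; exact ha0 (n - 1) i (by omega))
            (fun h => by rw [mem_Icc] at h; exact ha0 (n + 1) (t - i) (by omega))]
      · rw [if_neg hmem]; rw [mem_Icc] at hmem
        by_cases hri : r ≤ i
        · rw [if_neg (show ¬(t - i ∈ Icc r n) by rw [mem_Icc]; omega),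
            if_neg (show ¬(t - i ∈ Icc r (n + 1)) by rw [mem_Icc]; omega),
            mul_zero, mul_zero, sub_zero]
        · rw [if_neg (show ¬(i ∈ Icc r n) by rw [mem_Icc]; omega),
            if_neg (show ¬(i ∈ Icc r (n - 1)) by rw [mem_Icc]; omega),
            zero_mul, zero_mul, sub_zero]
  rcases Nat.lt_or_ge t (2 * r) with htr | htr
  · constructor
    · rw [hCt, Finset.Icc_eq_empty (by omega), Finset.sum_empty]
    · intro h1 _ _; omega
  · -- 2r ≤ t
    have hshift : ∀ w : ℕ → ℝ, ∑ i ∈ Icc r (t - r), Q i * w (i + 1)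
        = ∑ i ∈ Icc r (t - r), qq i * w i - qq r * w r + qq (t + 1 - r) * w (t + 1 - r) := by
      intro w
      have step1 : ∀ i ∈ Icc r (t - r), Q i * w (i + 1) = qq (i + 1) * w (i + 1) := by
        intro i hi; rw [mem_Icc] at hi
        simp only [hQ, hqq]
        rw [if_pos ⟨by omega, by omega⟩, show t + 1 - (i + 1) = t - i from by omega]
        norm_num
      rw [Finset.sum_congr rfl step1]
      have hmap : ∑ i ∈ Icc r (t - r), qq (i + 1) * w (i + 1)
          = ∑ i ∈ Icc (r + 1) (t - r + 1), qq i * w i := by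
        rw [← Finset.map_add_right_Icc r (t - r) 1, Finset.sum_map]
        simp only [addRightEmbedding_apply]
      rw [hmap, Finset.sum_Icc_succ_top (by omega : r + 1 ≤ t - r + 1)]
      have hins : ∑ i ∈ Icc r (t - r), qq i * w i
          = qq r * w r + ∑ i ∈ Icc (r + 1) (t - r), qq i * w i := by
        rw [show Icc r (t - r) = insert r (Icc (r + 1) (t - r)) from by
            ext x; simp only [mem_Icc, mem_insert]; omega,
          Finset.sum_insert (by rw [mem_Icc]; omega)]
      rw [hins, show t - r + 1 = t + 1 - r from by omega]
      ring
    have hPU : ∀ S : Finset ℕ, (∀ i ∈ S, i ≤ t) →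
        ∑ i ∈ S, P i * Y i - ∑ i ∈ S, qq i * Y i = ∑ i ∈ S, U i * Y i := by
      intro S hS
      rw [← Finset.sum_sub_distrib]
      apply Finset.sum_congr rfl
      intro i hi
      simp only [hU, hP]
      rw [if_pos (hS i hi)]
      ring
    have hCid : ((C r n) ^ 2 - C r (n - 1) * C r (n + 1)).coeff t
        = ∑ i ∈ Icc r (t - r), U i * Y i + qq r * Y r - qq (t + 1 - r) * Y (t + 1 - r) := by
      rw [hCt, Finset.sum_sub_distrib, hshift Y]
      have h1 := hPU (Icc r (t - r)) (fun i hi => by rw [mem_Icc] at hi; omega)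
      linear_combination h1
    have hAid : ((A r n) ^ 2 - A r (n - 1) * A r (n + 1)).coeff t
        = ∑ i ∈ Icc r (t - r), U i + qq r - qq (t + 1 - r) := by
      rw [hAt, Finset.sum_sub_distrib]
      have h2 := hshift (fun _ => 1)
      simp only [mul_one] at h2
      rw [h2]
      have h1 : ∑ i ∈ Icc r (t - r), P i - ∑ i ∈ Icc r (t - r), qq i
          = ∑ i ∈ Icc r (t - r), U i := by
        rw [← Finset.sum_sub_distrib]
        apply Finset.sum_congr rfl
        intro i hi; rw [mem_Icc] at hi
        simp only [hU, hP]
        rw [if_pos (show i ≤ t by omega)]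
      linear_combination h1
    have hmono : ∀ s, t ≤ n + s → 2 * s + 1 ≤ t → Y s ≤ Y (s + 1) := by
      intro s h1 h2
      have hkey := ylc_step y hynonneg hylc hyniz (n - s - 1) (n + s - t) (by omega)
      simp only [hYdef]
      rw [show n - s = n - s - 1 + 1 from by omega,
        show n - (s + 1) = n - s - 1 from by omega,
        show n + (s + 1) - t = n + s - t + 1 from by omega]
      nlinarith [hkey]
    have hsym : ∀ s, s ≤ t → Y (t - s) = Y s := by
      intro s hst
      simp only [hYdef]
      rw [show n - (t - s) = n + s - t from by omega,
        show n + (t - s) - t = n - s from by omega, mul_comm]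
    have hB : qq (t + 1 - r) * Y (t + 1 - r) ≤ qq (t + 1 - r) * Y r := by
      rcases Nat.lt_or_ge t (n + r) with hcase | hcase
      · have hYle : Y (t + 1 - r) ≤ Y r := by
          have hkey := ylc_step y hynonneg hylc hyniz (n - r) (n + r - t - 1) (by omega)
          simp only [hYdef]
          rw [show n - (t + 1 - r) = n + r - t - 1 from by omega,
            show n + (t + 1 - r) - t = n - r + 1 from by omega]
          rw [show n + r - t - 1 + 1 = n + r - t from by omega] at hkey
          calc y (n + r - t - 1) * y (n - r + 1) ≤ y (n + r - t) * y (n - r) := hkey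
            _ = y (n - r) * y (n + r - t) := mul_comm _ _
        have hqqnn : 0 ≤ qq (t + 1 - r) := by
          simp only [hqq]
          split_ifs with h
          · rcases Nat.lt_or_ge (n - 1) (t + 1 - r - 1) with hh | hh
            · rw [ha0 (n - 1) _ hh, zero_mul]
            · rcases Nat.lt_or_ge (n + 1) (t + 1 - (t + 1 - r)) with hh2 | hh2
              · rw [ha0 (n + 1) _ hh2, mul_zero]
              · exact mul_nonneg (hanonneg _ _ hh) (hanonneg _ _ hh2)
          · exact le_rfl
        exact mul_le_mul_of_nonneg_left hYle hqqnn
      · have h0 : qq (t + 1 - r) = 0 := by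
          simp only [hqq]
          split_ifs with h
          · rw [ha0 (n - 1) (t + 1 - r - 1) (by omega), zero_mul]
          · rfl
        rw [h0, zero_mul, zero_mul]
    have hRle : r ≤ max r (t - n) := le_max_left _ _
    have hshrink2 : ∑ i ∈ Icc r (t - r), U i * Y i
        = ∑ i ∈ Icc (max r (t - n)) (t - max r (t - n)), U i * Y i := by
      symm
      apply Finset.sum_subset
      · intro i hi; simp only [mem_Icc] at hi ⊢; omega
      · intro i hi hni
        simp only [mem_Icc] at hi hni
        rw [hUzero i (by omega), zero_mul]
    have habel : Y (max r (t - n)) * ∑ i ∈ Icc (max r (t - n)) (t - max r (t - n)), U i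
        ≤ ∑ i ∈ Icc (max r (t - n)) (t - max r (t - n)), U i * Y i := by
      apply abel_sum
      · intro s _; exact hwin s
      · intro s hs h2; exact hmono s (by omega) h2
      · intro s _ h2; exact hsym s (by omega)
    rcases le_or_gt t (n + r) with hcase | hcase
    · have hRr : max r (t - n) = r := by omega
      rw [hRr] at habel hshrink2
      have key : Y r * (∑ i ∈ Icc r (t - r), U i + qq r - qq (t + 1 - r))
          ≤ ((C r n) ^ 2 - C r (n - 1) * C r (n + 1)).coeff t := by
        rw [hCid, hshrink2]
        nlinarith [habel, hB]
      constructor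
      · have hA0 := hLC r n hn t
        have h2 : Y r * ((A r n) ^ 2 - A r (n - 1) * A r (n + 1)).coeff t
            ≤ ((C r n) ^ 2 - C r (n - 1) * C r (n + 1)).coeff t := by
          rw [hAid]; exact key
        exact le_trans (mul_nonneg (hYnn r) hA0) h2
      · intro _ _ _
        have hYr : Y r = y (n - r) * y (n + r - t) := by simp only [hYdef]
        calc ((A r n) ^ 2 - A r (n - 1) * A r (n + 1)).coeff t * (y (n + r - t) * y (n - r))
            = Y r * ((A r n) ^ 2 - A r (n - 1) * A r (n + 1)).coeff t := by
              rw [hYr]; ring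
          _ ≤ _ := by rw [hAid]; exact key
    · have hqr : qq r = 0 := by
        simp only [hqq]
        split_ifs with h
        · rw [ha0 (n + 1) (t + 1 - r) (by omega), mul_zero]
        · rfl
      have hqtr : qq (t + 1 - r) = 0 := by
        simp only [hqq]
        split_ifs with h
        · rw [ha0 (n - 1) (t + 1 - r - 1) (by omega), zero_mul]
        · rfl
      constructor
      · rw [hCid, hqr, hqtr, zero_mul, zero_mul, add_zero, sub_zero, hshrink2]
        exact le_trans (mul_nonneg (hYnn _) (hwin _)) habel
      · intro _ _ h3; omega
end

section
/- If the triangle $\{a(n,k)\}_{0 \le k \le n}$ of nonnegative reals is double LC-positive, then for any two log-concave sequences $\{x_k\}$ and $\{y_k\}$ of nonnegative reals (with no internal zeros), the sequence $z_n = \sum_{k=0}^n a(n,k) x_k y_{n-k}$ is log-concave. -/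
open Polynomial Finset

lemma seq_mono (s : ℕ → ℝ) (h0 : ∀ k, 0 ≤ s k)
    (hlc : ∀ k : ℕ, s k * s (k + 2) ≤ s (k + 1) ^ 2)
    (hniz : ∀ i j k : ℕ, i < j → j < k → s i ≠ 0 → s k ≠ 0 → s j ≠ 0) :
    ∀ j i : ℕ, i ≤ j → s i * s (j + 1) ≤ s (i + 1) * s j := by
  intro j
  induction j with
  | zero =>
    intro i hi
    interval_cases i
    exact le_of_eq (mul_comm _ _)
  | succ j ih =>
    intro i hi
    rcases Nat.eq_or_lt_of_le hi with heq | hlt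
    · subst heq; exact le_of_eq (mul_comm _ _)
    · have hij : i ≤ j := by omega
      by_cases hz : s (j + 1) = 0
      · have h2 : s i * s (j + 1 + 1) = 0 := by
          by_cases hzi : s i = 0
          · simp [hzi]
          · by_cases hz2 : s (j + 1 + 1) = 0
            · simp [hz2]
            · exact absurd hz (hniz i (j + 1) (j + 2) (by omega) (by omega) hzi hz2)
        rw [h2, hz, mul_zero]
      · have hpos : 0 < s (j + 1) := lt_of_le_of_ne (h0 _) (Ne.symm hz)
        have key : (s i * s (j + 1 + 1)) * s (j + 1) ≤ (s (i + 1) * s (j + 1)) * s (j + 1) := by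
          calc s i * s (j + 1 + 1) * s (j + 1) = (s i * s (j + 1)) * s (j + 2) := by ring_nf
          _ ≤ (s (i + 1) * s j) * s (j + 2) := mul_le_mul_of_nonneg_right (ih i hij) (h0 _)
          _ = s (i + 1) * (s j * s (j + 2)) := by ring
          _ ≤ s (i + 1) * (s (j + 1) ^ 2) := mul_le_mul_of_nonneg_left (hlc j) (h0 _)
          _ = (s (i + 1) * s (j + 1)) * s (j + 1) := by ring
        exact le_of_mul_le_mul_right key hpos

/-- Increment of the pair-weight ladder `i ↦ s i * s (t - i)`. -/
def Dd (s : ℕ → ℝ) (t : ℕ) : ℕ → ℝ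
  | 0 => s 0 * s t
  | (i + 1) => s (i + 1) * s (t - (i + 1)) - s i * s (t - i)

lemma Dd_sum (s : ℕ → ℝ) (t m : ℕ) :
    ∑ i ∈ Finset.range (m + 1), Dd s t i = s m * s (t - m) := by
  induction m with
  | zero => simp [Dd]
  | succ m ih => rw [Finset.sum_range_succ, ih]; simp [Dd]

lemma Dd_nonneg (s : ℕ → ℝ) (h0 : ∀ k, 0 ≤ s k)
    (hmono : ∀ j i : ℕ, i ≤ j → s i * s (j + 1) ≤ s (i + 1) * s j)
    (t i : ℕ) (hit : 2 * i ≤ t) : 0 ≤ Dd s t i := by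
  cases i with
  | zero => exact mul_nonneg (h0 0) (h0 t)
  | succ i =>
    have h := hmono (t - i - 1) i (by omega)
    have e1 : t - i - 1 + 1 = t - i := by omega
    have e2 : t - i - 1 = t - (i + 1) := by omega
    rw [e1, e2] at h
    simpa [Dd, sub_nonneg] using h

/-- Theorem 2: double LC-positive triangles are double PLC: if
both `{a n k}` and its reciprocal `{a n (n-k)}` are LC-positive, then for any
two nonnegative log-concave sequences `x`, `y` (no internal zeros), the sequence
`z n = ∑_{k=0}^n a n k * x k * y (n-k)` is log-concave. -/
theorem stmt_9 (a : ℕ → ℕ → ℝ)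
    (hanonneg : ∀ n k : ℕ, k ≤ n → 0 ≤ a n k)
    (ha0 : ∀ n k : ℕ, n < k → a n k = 0)
    (A Astar : ℕ → ℕ → ℝ[X])
    (hA : ∀ r n : ℕ, A r n = ∑ k ∈ Icc r n, Polynomial.C (a n k) * X ^ k)
    (hAstar : ∀ r n : ℕ, Astar r n = ∑ k ∈ Icc r n, Polynomial.C (a n (n - k)) * X ^ k)
    (hLC : ∀ r n : ℕ, 1 ≤ n → ∀ t : ℕ,
      0 ≤ ((A r n) ^ 2 - A r (n - 1) * A r (n + 1)).coeff t)
    (hLCstar : ∀ r n : ℕ, 1 ≤ n → ∀ t : ℕ,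
      0 ≤ ((Astar r n) ^ 2 - Astar r (n - 1) * Astar r (n + 1)).coeff t)
    (x y : ℕ → ℝ)
    (hxnonneg : ∀ k, 0 ≤ x k) (hynonneg : ∀ k, 0 ≤ y k)
    (hxlc : ∀ k : ℕ, x k * x (k + 2) ≤ x (k + 1) ^ 2)
    (hylc : ∀ k : ℕ, y k * y (k + 2) ≤ y (k + 1) ^ 2)
    (hxniz : ∀ i j k : ℕ, i < j → j < k → x i ≠ 0 → x k ≠ 0 → x j ≠ 0)
    (hyniz : ∀ i j k : ℕ, i < j → j < k → y i ≠ 0 → y k ≠ 0 → y j ≠ 0)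
    (z : ℕ → ℝ)
    (hz : ∀ n : ℕ, z n = ∑ k ∈ Finset.range (n + 1), a n k * x k * y (n - k)) :
    ∀ n : ℕ, z n * z (n + 2) ≤ z (n + 1) ^ 2 := by
  intro n
  have ha_nn : ∀ m k, 0 ≤ a m k := by
    intro m k
    rcases le_or_gt k m with h | h
    · exact hanonneg m k h
    · rw [ha0 m k h]
  have hxmono := seq_mono x hxnonneg hxlc hxniz
  have hymono := seq_mono y hynonneg hylc hyniz
  -- coefficient formulas
  have coA : ∀ r m k : ℕ, (A r m).coeff k = if r ≤ k ∧ k ≤ m then a m k else 0 := by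
    intro r m k
    rw [hA r m, Polynomial.finset_sum_coeff]
    simp only [Polynomial.coeff_C_mul, Polynomial.coeff_X_pow, mul_ite, mul_one, mul_zero]
    rw [Finset.sum_ite_eq (Icc r m) k (fun j => a m j)]
    simp [Finset.mem_Icc]
  have coAs : ∀ r m k : ℕ, (Astar r m).coeff k = if r ≤ k ∧ k ≤ m then a m (m - k) else 0 := by
    intro r m k
    rw [hAstar r m, Polynomial.finset_sum_coeff]
    simp only [Polynomial.coeff_C_mul, Polynomial.coeff_X_pow, mul_ite, mul_one, mul_zero]
    rw [Finset.sum_ite_eq (Icc r m) k (fun j => a m (m - j))]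
    simp [Finset.mem_Icc]
  -- nonnegativity of guarded coefficients
  have hite : ∀ (P : Prop) [Decidable P] (m k : ℕ), 0 ≤ (if P then a m k else 0) := by
    intro P _ m k; split_ifs
    · exact ha_nn m k
    · exact le_rfl
  -- the core coefficient inequality
  have core : ∀ t : ℕ, t ≤ 2*n+2 → ∀ i j : ℕ,
      (∑ p ∈ Finset.HasAntidiagonal.antidiagonal t,
        if i ≤ p.1 ∧ i ≤ p.2 ∧ p.1 + j ≤ n ∧ p.2 + j ≤ n+2 then a n p.1 * a (n+2) p.2 else 0)
      ≤ ∑ p ∈ Finset.HasAntidiagonal.antidiagonal t,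
        if i ≤ p.1 ∧ i ≤ p.2 ∧ p.1 + j ≤ n+1 ∧ p.2 + j ≤ n+1 then a (n+1) p.1 * a (n+1) p.2 else 0 := by
    intro t ht i j
    have hite : ∀ (P : Prop) (inst : Decidable P) (m k : ℕ), 0 ≤ (if P then a m k else 0) := by
      intro P inst m k; split_ifs
      · exact ha_nn m k
      · exact le_rfl
    rcases le_or_gt (t + j) (n + 1 + i) with hc | hc
    · -- use hLC at row n+1, truncation i
      have hP : (∑ p ∈ Finset.HasAntidiagonal.antidiagonal t,
          if i ≤ p.1 ∧ i ≤ p.2 ∧ p.1 + j ≤ n+1 ∧ p.2 + j ≤ n+1 then a (n+1) p.1 * a (n+1) p.2 else 0)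
          = (A i (n+1) * A i (n+1)).coeff t := by
        rw [Polynomial.coeff_mul]
        apply Finset.sum_congr rfl
        intro p hp
        have hpt : p.1 + p.2 = t := Finset.HasAntidiagonal.mem_antidiagonal.mp hp
        rw [coA, coA]
        by_cases h1 : i ≤ p.1 ∧ p.1 ≤ n+1
        · by_cases h2 : i ≤ p.2 ∧ p.2 ≤ n+1
          · rw [if_pos h1, if_pos h2, if_pos (by omega)]
          · rw [if_neg h2, mul_zero, if_neg (by omega)]
        · rw [if_neg h1, zero_mul, if_neg (by omega)]
      have hN : (∑ p ∈ Finset.HasAntidiagonal.antidiagonal t,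
          if i ≤ p.1 ∧ i ≤ p.2 ∧ p.1 + j ≤ n ∧ p.2 + j ≤ n+2 then a n p.1 * a (n+2) p.2 else 0)
          ≤ (A i n * A i (n+2)).coeff t := by
        rw [Polynomial.coeff_mul]
        apply Finset.sum_le_sum
        intro p hp
        rw [coA, coA]
        by_cases hw : i ≤ p.1 ∧ i ≤ p.2 ∧ p.1 + j ≤ n ∧ p.2 + j ≤ n+2
        · rw [if_pos hw, if_pos (show i ≤ p.1 ∧ p.1 ≤ n by omega),
            if_pos (show i ≤ p.2 ∧ p.2 ≤ n+2 by omega)]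
        · rw [if_neg hw]
          exact mul_nonneg (hite _ _ _ _) (hite _ _ _ _)
      have hlc1 := hLC i (n+1) (by omega) t
      rw [show (n+1) - 1 = n from rfl, show (n+1) + 1 = n+2 from rfl, sq,
        Polynomial.coeff_sub] at hlc1
      rw [hP]
      linarith
    · -- use hLCstar at row n+1, truncation j
      have hP : (∑ p ∈ Finset.HasAntidiagonal.antidiagonal t,
          if i ≤ p.1 ∧ i ≤ p.2 ∧ p.1 + j ≤ n+1 ∧ p.2 + j ≤ n+1 then a (n+1) p.1 * a (n+1) p.2 else 0)
          = (Astar j (n+1) * Astar j (n+1)).coeff (2*n+2-t) := by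
        rw [Polynomial.coeff_mul]
        have hc1 : ∀ q ∈ Finset.HasAntidiagonal.antidiagonal (2*n+2-t),
            (Astar j (n+1)).coeff q.1 * (Astar j (n+1)).coeff q.2
            = if (j ≤ q.1 ∧ q.1 ≤ n+1) ∧ (j ≤ q.2 ∧ q.2 ≤ n+1) then
                a (n+1) (n+1 - q.1) * a (n+1) (n+1 - q.2) else 0 := by
          intro q _
          rw [coAs, coAs]
          by_cases h1 : j ≤ q.1 ∧ q.1 ≤ n+1 <;> by_cases h2 : j ≤ q.2 ∧ q.2 ≤ n+1 <;>
            simp [h1, h2]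
        rw [Finset.sum_congr rfl hc1]
        rw [← Finset.sum_filter, ← Finset.sum_filter]
        apply Finset.sum_nbij' (fun p => (n+1 - p.1, n+1 - p.2)) (fun q => (n+1 - q.1, n+1 - q.2))
        · intro p hp
          rw [Finset.mem_filter, Finset.HasAntidiagonal.mem_antidiagonal] at hp ⊢
          omega
        · intro q hq
          rw [Finset.mem_filter, Finset.HasAntidiagonal.mem_antidiagonal] at hq ⊢
          omega
        · intro p hp
          rw [Finset.mem_filter, Finset.HasAntidiagonal.mem_antidiagonal] at hp
          have e1 : n+1 - (n+1 - p.1) = p.1 := by omega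
          have e2 : n+1 - (n+1 - p.2) = p.2 := by omega
          simp [e1, e2]
        · intro q hq
          rw [Finset.mem_filter, Finset.HasAntidiagonal.mem_antidiagonal] at hq
          have e1 : n+1 - (n+1 - q.1) = q.1 := by omega
          have e2 : n+1 - (n+1 - q.2) = q.2 := by omega
          simp [e1, e2]
        · intro p hp
          rw [Finset.mem_filter, Finset.HasAntidiagonal.mem_antidiagonal] at hp
          have e1 : n+1 - (n+1 - p.1) = p.1 := by omega
          have e2 : n+1 - (n+1 - p.2) = p.2 := by omega
          rw [e1, e2]
      have hN : (∑ p ∈ Finset.HasAntidiagonal.antidiagonal t,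
          if i ≤ p.1 ∧ i ≤ p.2 ∧ p.1 + j ≤ n ∧ p.2 + j ≤ n+2 then a n p.1 * a (n+2) p.2 else 0)
          = (Astar j n * Astar j (n+2)).coeff (2*n+2-t) := by
        rw [Polynomial.coeff_mul]
        have hc1 : ∀ q ∈ Finset.HasAntidiagonal.antidiagonal (2*n+2-t),
            (Astar j n).coeff q.1 * (Astar j (n+2)).coeff q.2
            = if (j ≤ q.1 ∧ q.1 ≤ n) ∧ (j ≤ q.2 ∧ q.2 ≤ n+2) then
                a n (n - q.1) * a (n+2) (n+2 - q.2) else 0 := by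
          intro q _
          rw [coAs, coAs]
          by_cases h1 : j ≤ q.1 ∧ q.1 ≤ n <;> by_cases h2 : j ≤ q.2 ∧ q.2 ≤ n+2 <;>
            simp [h1, h2]
        rw [Finset.sum_congr rfl hc1]
        rw [← Finset.sum_filter, ← Finset.sum_filter]
        apply Finset.sum_nbij' (fun p => (n - p.1, n+2 - p.2)) (fun q => (n - q.1, n+2 - q.2))
        · intro p hp
          rw [Finset.mem_filter, Finset.HasAntidiagonal.mem_antidiagonal] at hp ⊢
          omega
        · intro q hq
          rw [Finset.mem_filter, Finset.HasAntidiagonal.mem_antidiagonal] at hq ⊢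
          omega
        · intro p hp
          rw [Finset.mem_filter, Finset.HasAntidiagonal.mem_antidiagonal] at hp
          have e1 : n - (n - p.1) = p.1 := by omega
          have e2 : n+2 - (n+2 - p.2) = p.2 := by omega
          simp [e1, e2]
        · intro q hq
          rw [Finset.mem_filter, Finset.HasAntidiagonal.mem_antidiagonal] at hq
          have e1 : n - (n - q.1) = q.1 := by omega
          have e2 : n+2 - (n+2 - q.2) = q.2 := by omega
          simp [e1, e2]
        · intro p hp
          rw [Finset.mem_filter, Finset.HasAntidiagonal.mem_antidiagonal] at hp
          have e1 : n - (n - p.1) = p.1 := by omega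
          have e2 : n+2 - (n+2 - p.2) = p.2 := by omega
          rw [e1, e2]
      have hlc2 := hLCstar j (n+1) (by omega) (2*n+2-t)
      rw [show (n+1) - 1 = n from rfl, show (n+1) + 1 = n+2 from rfl, sq,
        Polynomial.coeff_sub] at hlc2
      rw [hP, hN]
      linarith
  -- expansion of a convolution-product fiber into increments
  have expand : ∀ t : ℕ, t ≤ 2*n+2 → ∀ m1 m2 : ℕ, m1 + m2 = 2*n+2 →
      ∑ p ∈ Finset.HasAntidiagonal.antidiagonal t,
          (a m1 p.1 * x p.1 * y (m1 - p.1)) * (a m2 p.2 * x p.2 * y (m2 - p.2))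
      = ∑ i ∈ Finset.range (t/2+1), ∑ j ∈ Finset.range ((2*n+2-t)/2+1),
          Dd x t i * Dd y (2*n+2-t) j *
          (∑ p ∈ Finset.HasAntidiagonal.antidiagonal t,
            if i ≤ p.1 ∧ i ≤ p.2 ∧ p.1 + j ≤ m1 ∧ p.2 + j ≤ m2 then a m1 p.1 * a m2 p.2 else 0) := by
    intro t ht m1 m2 hm
    -- step 1: per-term expansion
    have hterm : ∀ p ∈ Finset.HasAntidiagonal.antidiagonal t,
        (a m1 p.1 * x p.1 * y (m1 - p.1)) * (a m2 p.2 * x p.2 * y (m2 - p.2))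
        = ∑ i ∈ Finset.range (t/2+1), ∑ j ∈ Finset.range ((2*n+2-t)/2+1),
            (if i ≤ p.1 ∧ i ≤ p.2 ∧ p.1 + j ≤ m1 ∧ p.2 + j ≤ m2 then
              Dd x t i * Dd y (2*n+2-t) j * (a m1 p.1 * a m2 p.2) else 0) := by
      intro p hp
      have hpt : p.1 + p.2 = t := Finset.HasAntidiagonal.mem_antidiagonal.mp hp
      by_cases hb : p.1 ≤ m1 ∧ p.2 ≤ m2
      · -- split the guard
        have hsplit : ∀ i j : ℕ,
            (if i ≤ p.1 ∧ i ≤ p.2 ∧ p.1 + j ≤ m1 ∧ p.2 + j ≤ m2 then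
              Dd x t i * Dd y (2*n+2-t) j * (a m1 p.1 * a m2 p.2) else 0)
            = ((if i ≤ p.1 ∧ i ≤ p.2 then Dd x t i else 0) *
               (if p.1 + j ≤ m1 ∧ p.2 + j ≤ m2 then Dd y (2*n+2-t) j else 0)) *
              (a m1 p.1 * a m2 p.2) := by
          intro i j
          by_cases h1 : i ≤ p.1 ∧ i ≤ p.2
          · by_cases h2 : p.1 + j ≤ m1 ∧ p.2 + j ≤ m2
            · rw [if_pos ⟨h1.1, h1.2, h2.1, h2.2⟩, if_pos h1, if_pos h2]
            · rw [if_neg (by tauto), if_neg h2, mul_zero, zero_mul]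
          · rw [if_neg (by tauto), if_neg h1, zero_mul, zero_mul]
        have hx1 : (∑ i ∈ Finset.range (t/2+1), if i ≤ p.1 ∧ i ≤ p.2 then Dd x t i else 0)
            = x p.1 * x p.2 := by
          rw [← Finset.sum_filter]
          rcases le_total p.1 p.2 with hle | hle
          · have hfs : (Finset.range (t/2+1)).filter (fun i => i ≤ p.1 ∧ i ≤ p.2)
                = Finset.range (p.1+1) := by
              ext i
              simp only [Finset.mem_filter, Finset.mem_range]
              omega
            rw [hfs, Dd_sum]
            have h2 : t - p.1 = p.2 := by omega
            rw [h2]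
          · have hfs : (Finset.range (t/2+1)).filter (fun i => i ≤ p.1 ∧ i ≤ p.2)
                = Finset.range (p.2+1) := by
              ext i
              simp only [Finset.mem_filter, Finset.mem_range]
              omega
            rw [hfs, Dd_sum]
            have h2 : t - p.2 = p.1 := by omega
            rw [h2, mul_comm]
        have hy1 : (∑ j ∈ Finset.range ((2*n+2-t)/2+1),
              if p.1 + j ≤ m1 ∧ p.2 + j ≤ m2 then Dd y (2*n+2-t) j else 0)
            = y (m1 - p.1) * y (m2 - p.2) := by
          rw [← Finset.sum_filter]
          rcases le_total (m1 - p.1) (m2 - p.2) with hle | hle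
          · have hfs : (Finset.range ((2*n+2-t)/2+1)).filter
                (fun j => p.1 + j ≤ m1 ∧ p.2 + j ≤ m2) = Finset.range (m1 - p.1 + 1) := by
              ext j
              simp only [Finset.mem_filter, Finset.mem_range]
              omega
            rw [hfs, Dd_sum]
            have h2 : 2*n+2-t - (m1 - p.1) = m2 - p.2 := by omega
            rw [h2]
          · have hfs : (Finset.range ((2*n+2-t)/2+1)).filter
                (fun j => p.1 + j ≤ m1 ∧ p.2 + j ≤ m2) = Finset.range (m2 - p.2 + 1) := by
              ext j
              simp only [Finset.mem_filter, Finset.mem_range]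
              omega
            rw [hfs, Dd_sum]
            have h2 : 2*n+2-t - (m2 - p.2) = m1 - p.1 := by omega
            rw [h2, mul_comm]
        calc (a m1 p.1 * x p.1 * y (m1 - p.1)) * (a m2 p.2 * x p.2 * y (m2 - p.2))
            = ((x p.1 * x p.2) * (y (m1 - p.1) * y (m2 - p.2))) * (a m1 p.1 * a m2 p.2) := by ring
          _ = ((∑ i ∈ Finset.range (t/2+1), if i ≤ p.1 ∧ i ≤ p.2 then Dd x t i else 0) *
               (∑ j ∈ Finset.range ((2*n+2-t)/2+1),
                 if p.1 + j ≤ m1 ∧ p.2 + j ≤ m2 then Dd y (2*n+2-t) j else 0)) *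
              (a m1 p.1 * a m2 p.2) := by rw [hx1, hy1]
          _ = ∑ i ∈ Finset.range (t/2+1), ∑ j ∈ Finset.range ((2*n+2-t)/2+1),
                ((if i ≤ p.1 ∧ i ≤ p.2 then Dd x t i else 0) *
                 (if p.1 + j ≤ m1 ∧ p.2 + j ≤ m2 then Dd y (2*n+2-t) j else 0)) *
                (a m1 p.1 * a m2 p.2) := by
              rw [Finset.sum_mul_sum]
              simp only [Finset.sum_mul]
          _ = _ := by
              apply Finset.sum_congr rfl; intro i _
              apply Finset.sum_congr rfl; intro j _
              rw [hsplit]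
      · rcases (show m1 < p.1 ∨ m2 < p.2 by omega) with h | h <;> simp [ha0 _ _ h]
    rw [Finset.sum_congr rfl hterm]
    rw [Finset.sum_comm]
    apply Finset.sum_congr rfl; intro i _
    rw [Finset.sum_comm]
    apply Finset.sum_congr rfl; intro j _
    rw [Finset.mul_sum]
    apply Finset.sum_congr rfl; intro p _
    rw [mul_ite, mul_zero]
  -- per-fiber inequality
  have key : ∀ t : ℕ, t ≤ 2*n+2 →
      ∑ p ∈ Finset.HasAntidiagonal.antidiagonal t,
          (a n p.1 * x p.1 * y (n - p.1)) * (a (n+2) p.2 * x p.2 * y (n+2 - p.2))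
      ≤ ∑ p ∈ Finset.HasAntidiagonal.antidiagonal t,
          (a (n+1) p.1 * x p.1 * y (n+1 - p.1)) * (a (n+1) p.2 * x p.2 * y (n+1 - p.2)) := by
    intro t ht
    rw [expand t ht n (n+2) (by omega), expand t ht (n+1) (n+1) (by omega)]
    apply Finset.sum_le_sum
    intro i hi
    apply Finset.sum_le_sum
    intro j hj
    have hDx : 0 ≤ Dd x t i :=
      Dd_nonneg x hxnonneg hxmono t i (by rw [Finset.mem_range] at hi; omega)
    have hDy : 0 ≤ Dd y (2*n+2-t) j :=
      Dd_nonneg y hynonneg hymono (2*n+2-t) j (by rw [Finset.mem_range] at hj; omega)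
    exact mul_le_mul_of_nonneg_left (core t ht i j) (mul_nonneg hDx hDy)
  -- fiber decomposition machinery
  have fib : ∀ (s : Finset (ℕ×ℕ)) (F : ℕ×ℕ → ℝ),
      (∀ p ∈ s, p.1 + p.2 < 2*n+3) → (∀ p : ℕ×ℕ, p.1 + p.2 < 2*n+3 → p ∉ s → F p = 0) →
      ∑ p ∈ s, F p = ∑ t ∈ Finset.range (2*n+3), ∑ p ∈ Finset.HasAntidiagonal.antidiagonal t, F p := by
    intro s F hs hF
    have hdisj : Set.PairwiseDisjoint ↑(Finset.range (2*n+3))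
        (fun t => (Finset.HasAntidiagonal.antidiagonal t : Finset (ℕ×ℕ))) := by
      intro t1 _ t2 _ hne
      simp only [Function.onFun, Finset.disjoint_left]
      intro p hp1 hp2
      rw [Finset.HasAntidiagonal.mem_antidiagonal] at hp1 hp2
      exact hne (hp1 ▸ hp2)
    rw [← Finset.sum_biUnion hdisj]
    apply Finset.sum_subset
    · intro p hp
      rw [Finset.mem_biUnion]
      exact ⟨p.1 + p.2, Finset.mem_range.mpr (hs p hp), Finset.HasAntidiagonal.mem_antidiagonal.mpr rfl⟩
    · intro p hp hnp
      rw [Finset.mem_biUnion] at hp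
      obtain ⟨t, htr, hpt⟩ := hp
      rw [Finset.HasAntidiagonal.mem_antidiagonal] at hpt
      exact hF p (by rw [hpt]; exact Finset.mem_range.mp htr) hnp
  -- main decompositions
  have e1 : z (n+1) ^ 2 = ∑ t ∈ Finset.range (2*n+3), ∑ p ∈ Finset.HasAntidiagonal.antidiagonal t,
      (a (n+1) p.1 * x p.1 * y (n+1 - p.1)) * (a (n+1) p.2 * x p.2 * y (n+1 - p.2)) := by
    have h1 : z (n+1) ^ 2 = ∑ p ∈ Finset.range (n+2) ×ˢ Finset.range (n+2),
        (a (n+1) p.1 * x p.1 * y (n+1 - p.1)) * (a (n+1) p.2 * x p.2 * y (n+1 - p.2)) := by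
      rw [Finset.sum_product, hz (n+1), sq, Finset.sum_mul_sum]
    rw [h1]
    apply fib
    · intro p hp
      rw [Finset.mem_product, Finset.mem_range, Finset.mem_range] at hp
      omega
    · intro p hpt hp
      rw [Finset.mem_product, Finset.mem_range, Finset.mem_range] at hp
      rcases (show n+1 < p.1 ∨ n+1 < p.2 by omega) with h | h <;> simp [ha0 _ _ h]
  have e2 : z n * z (n+2) = ∑ t ∈ Finset.range (2*n+3), ∑ p ∈ Finset.HasAntidiagonal.antidiagonal t,
      (a n p.1 * x p.1 * y (n - p.1)) * (a (n+2) p.2 * x p.2 * y (n+2 - p.2)) := by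
    have h1 : z n * z (n+2) = ∑ p ∈ Finset.range (n+1) ×ˢ Finset.range (n+3),
        (a n p.1 * x p.1 * y (n - p.1)) * (a (n+2) p.2 * x p.2 * y (n+2 - p.2)) := by
      rw [Finset.sum_product, hz n, hz (n+2), Finset.sum_mul_sum]
    rw [h1]
    apply fib
    · intro p hp
      rw [Finset.mem_product, Finset.mem_range, Finset.mem_range] at hp
      omega
    · intro p hpt hp
      rw [Finset.mem_product, Finset.mem_range, Finset.mem_range] at hp
      rcases (show n < p.1 ∨ n+2 < p.2 by omega) with h | h <;> simp [ha0 _ _ h]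
  rw [e1, e2]
  apply Finset.sum_le_sum
  intro t ht
  exact key t (by rw [Finset.mem_range] at ht; omega)
end

section
/- If the triangle $\{a(n,k)\}$ satisfies: (A) for each $n,t$ there exists an index $m = m(n,t)$ such that $a_k(n,t) < 0$ for $k < m$ and $a_k(n,t) \ge 0$ for $k \ge m$, and (B) the sequence of polynomials $\mathscr{A}_0(n;q) = \sum_{k=0}^n a(n,k)q^k$ is $q$-log-concave, then $\{a(n,k)\}$ is LC-positive. -/
open Polynomial Finset

lemma sum_range_pair' (t : ℕ) (g : ℕ → ℝ) :
    ∑ k ∈ range (t+1), g k =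
      ∑ k ∈ Icc 0 (t/2), (if 2*k = t then g k else g k + g (t-k)) := by
  have hsplit : range (t+1) = Icc 0 (t/2) ∪ Icc (t/2+1) t := by
    ext x; simp only [mem_range, mem_union, mem_Icc]; omega
  have hdisj : Disjoint (Icc 0 (t/2)) (Icc (t/2+1) t) := by
    rw [Finset.disjoint_left]; intro x hx hx'
    simp only [mem_Icc] at hx hx'; omega
  rw [hsplit, Finset.sum_union hdisj]
  have h2 : ∑ k ∈ Icc (t/2+1) t, g k
      = ∑ k ∈ (Icc 0 (t/2)).filter (fun k => ¬ 2*k = t), g (t-k) := by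
    apply Finset.sum_nbij' (fun k => t - k) (fun k => t - k)
    · intro x hx; simp only [mem_Icc] at hx; simp only [mem_filter, mem_Icc]; omega
    · intro x hx; simp only [mem_filter, mem_Icc] at hx; simp only [mem_Icc]; omega
    · intro x hx; simp only [mem_Icc] at hx; omega
    · intro x hx; simp only [mem_filter, mem_Icc] at hx; omega
    · intro x hx; simp only [mem_Icc] at hx; congr 1; omega
  rw [h2, Finset.sum_filter, ← Finset.sum_add_distrib]
  apply Finset.sum_congr rfl
  intro k _
  by_cases h : 2*k = t <;> simp [h]

/-- Corollary 2.5: if (A) for each `n ≥ 1` and `t` there is an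
index `m` such that `a_k(n,t) < 0` for `k < m` and `a_k(n,t) ≥ 0` for `k ≥ m`
(over the range `k ≤ ⌊t/2⌋`), and (B) the sequence `𝒜_0(n;q)` is
q-log-concave, then the triangle is LC-positive. -/
theorem stmt_10 (a : ℕ → ℕ → ℝ)
    (hanonneg : ∀ n k : ℕ, k ≤ n → 0 ≤ a n k)
    (ha0 : ∀ n k : ℕ, n < k → a n k = 0)
    (A : ℕ → ℕ → ℝ[X])
    (hA : ∀ r n : ℕ, A r n = ∑ k ∈ Icc r n, Polynomial.C (a n k) * X ^ k)
    (aknt : ℕ → ℕ → ℕ → ℝ)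
    (haknt : ∀ n t k : ℕ, aknt n t k =
      if 2 * k = t then a n k ^ 2 - a (n - 1) k * a (n + 1) k
      else 2 * a n k * a n (t - k) - a (n - 1) k * a (n + 1) (t - k) -
        a (n + 1) k * a (n - 1) (t - k))
    (hcondA : ∀ n t : ℕ, 1 ≤ n → ∃ m : ℕ, ∀ k : ℕ, k ≤ t / 2 →
      (k < m → aknt n t k < 0) ∧ (m ≤ k → 0 ≤ aknt n t k))
    (hcondB : ∀ n : ℕ, 1 ≤ n → ∀ t : ℕ,
      0 ≤ ((A 0 n) ^ 2 - A 0 (n - 1) * A 0 (n + 1)).coeff t) :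
    ∀ r n : ℕ, 1 ≤ n → ∀ t : ℕ,
      0 ≤ ((A r n) ^ 2 - A r (n - 1) * A r (n + 1)).coeff t := by
  have hcoeff : ∀ r n k : ℕ, (A r n).coeff k = if r ≤ k then a n k else 0 := by
    intro r n k
    rw [hA, Polynomial.finset_sum_coeff]
    simp only [Polynomial.coeff_C_mul, Polynomial.coeff_X_pow, mul_ite, mul_one, mul_zero]
    rw [Finset.sum_ite_eq (Icc r n) k (fun j => a n j)]
    by_cases h1 : r ≤ k
    · by_cases h2 : k ≤ n
      · simp [mem_Icc, h1, h2]
      · simp [mem_Icc, h1, h2, ha0 n k (by omega)]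
    · simp [mem_Icc, h1]
  have hkey : ∀ r n t : ℕ, ((A r n) ^ 2 - A r (n - 1) * A r (n + 1)).coeff t
      = ∑ k ∈ Icc r (t/2), aknt n t k := by
    intro r n t
    have hexp : ((A r n) ^ 2 - A r (n - 1) * A r (n + 1)).coeff t
        = ∑ k ∈ range (t+1),
            ((if r ≤ k then a n k else 0) * (if r ≤ t - k then a n (t-k) else 0)
            - (if r ≤ k then a (n-1) k else 0) * (if r ≤ t - k then a (n+1) (t-k) else 0)) := by
      rw [Polynomial.coeff_sub, sq, Polynomial.coeff_mul, Polynomial.coeff_mul,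
        Finset.Nat.sum_antidiagonal_eq_sum_range_succ_mk,
        Finset.Nat.sum_antidiagonal_eq_sum_range_succ_mk, ← Finset.sum_sub_distrib]
      apply Finset.sum_congr rfl
      intro k _
      rw [hcoeff, hcoeff, hcoeff, hcoeff]
    rw [hexp, sum_range_pair']
    have hIcc : Icc r (t/2) = (Icc 0 (t/2)).filter (fun k => r ≤ k) := by
      ext x; simp only [mem_Icc, mem_filter]; omega
    rw [hIcc, Finset.sum_filter]
    apply Finset.sum_congr rfl
    intro k hk
    simp only [mem_Icc] at hk
    by_cases h2 : 2*k = t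
    · have htk : t - k = k := by omega
      rw [if_pos h2, htk]
      by_cases hr : r ≤ k
      · simp only [if_pos hr, haknt, if_pos h2]; ring
      · simp [hr]
    · have hlt : k < t - k := by omega
      have htk : t - (t - k) = k := by omega
      rw [if_neg h2, htk]
      by_cases hr : r ≤ k
      · have hr2 : r ≤ t - k := by omega
        simp only [if_pos hr, if_pos hr2, haknt, if_neg h2]
        ring
      · simp [hr]
  intro r n hn t
  rw [hkey]
  obtain ⟨m, hm⟩ := hcondA n t hn
  by_cases hrm : m ≤ r
  · apply Finset.sum_nonneg
    intro k hk
    simp only [mem_Icc] at hk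
    exact (hm k hk.2).2 (by omega)
  · have h0 : (0:ℝ) ≤ ∑ k ∈ Icc 0 (t/2), aknt n t k := by
      have := hcondB n hn t
      rwa [hkey 0 n t] at this
    have hsplit : ∑ k ∈ Icc 0 (t/2), aknt n t k
        = (∑ k ∈ (Icc 0 (t/2)).filter (fun k => k < r), aknt n t k)
          + ∑ k ∈ Icc r (t/2), aknt n t k := by
      have hf : (Icc 0 (t/2)).filter (fun k => ¬ k < r) = Icc r (t/2) := by
        ext x; simp only [mem_filter, mem_Icc, not_lt]; omega
      rw [← hf, Finset.sum_filter_add_sum_filter_not]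
    have hneg : (∑ k ∈ (Icc 0 (t/2)).filter (fun k => k < r), aknt n t k) ≤ 0 := by
      apply Finset.sum_nonpos
      intro k hk
      simp only [mem_filter, mem_Icc] at hk
      exact le_of_lt ((hm k hk.1.2).1 (by omega))
    linarith
end

section
/- Let $\lambda, \mu \ge 0$ and let $\{u_k\}_{k \in \mathbb{Z}}$ be a log-concave sequence of nonnegative reals. Define the operator $\mathcal{L}(u)_k = \lambda u_k + \mu u_{k-1}$. Then the sequence $\{\mathcal{L}(u)_k\}_{k \in \mathbb{Z}}$ is also log-concave, and consequently $\{\mathcal{L}^n(u)_k\}_{k \in \mathbb{Z}}$ is log-concave for every $n \ge 0$. -/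
/-- The operator `ℒ[λ,μ]` on doubly infinite sequences:
`ℒ(u)_k = λ u_k + μ u_{k-1}`. -/
def Lop (lam mu : ℝ) (u : ℤ → ℝ) : ℤ → ℝ := fun k => lam * u k + mu * u (k - 1)

lemma step_ineq (u : ℤ → ℝ) (hunonneg : ∀ k, 0 ≤ u k)
    (hulc : ∀ k : ℤ, u (k - 1) * u (k + 1) ≤ u k ^ 2)
    (huniz : ∀ i j k : ℤ, i < j → j < k → u i ≠ 0 → u k ≠ 0 → u j ≠ 0)
    (k : ℤ) : u (k - 2) * u (k + 1) ≤ u (k - 1) * u k := by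
  have h1 : u (k - 2) * u k ≤ u (k - 1) ^ 2 := by
    have := hulc (k - 1)
    have e1 : k - 1 - 1 = k - 2 := by ring
    have e2 : k - 1 + 1 = k := by ring
    rw [e1, e2] at this; exact this
  have h2 := hulc k
  by_cases hz : u (k - 1) * u k = 0
  · rcases mul_eq_zero.1 hz with h | h
    · by_cases ha : u (k - 2) = 0
      · rw [ha, zero_mul, hz]
      · by_cases hb : u (k + 1) = 0
        · rw [hb, mul_zero, hz]
        · exact absurd (huniz (k - 2) (k - 1) (k + 1) (by omega) (by omega) ha hb) (by simp [h])
    · by_cases ha : u (k - 2) = 0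
      · rw [ha, zero_mul, hz]
      · by_cases hb : u (k + 1) = 0
        · rw [hb, mul_zero, hz]
        · exact absurd (huniz (k - 2) k (k + 1) (by omega) (by omega) ha hb) (by simp [h])
  · have hpos : 0 < u (k - 1) * u k :=
      lt_of_le_of_ne (mul_nonneg (hunonneg _) (hunonneg _)) (Ne.symm hz)
    rw [← mul_le_mul_iff_of_pos_right hpos]
    calc u (k - 2) * u (k + 1) * (u (k - 1) * u k)
        = (u (k - 2) * u k) * (u (k - 1) * u (k + 1)) := by ring
      _ ≤ u (k - 1) ^ 2 * u k ^ 2 :=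
          mul_le_mul h1 h2 (mul_nonneg (hunonneg _) (hunonneg _)) (sq_nonneg _)
      _ = u (k - 1) * u k * (u (k - 1) * u k) := by ring

lemma Lop_lc (lam mu : ℝ) (hlam : 0 ≤ lam) (hmu : 0 ≤ mu)
    (u : ℤ → ℝ) (hunonneg : ∀ k, 0 ≤ u k)
    (hulc : ∀ k : ℤ, u (k - 1) * u (k + 1) ≤ u k ^ 2)
    (huniz : ∀ i j k : ℤ, i < j → j < k → u i ≠ 0 → u k ≠ 0 → u j ≠ 0)
    (k : ℤ) :
    Lop lam mu u (k - 1) * Lop lam mu u (k + 1) ≤ (Lop lam mu u k) ^ 2 := by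
  have h1 : u (k - 2) * u k ≤ u (k - 1) ^ 2 := by
    have := hulc (k - 1)
    have e1 : k - 1 - 1 = k - 2 := by ring
    have e2 : k - 1 + 1 = k := by ring
    rw [e1, e2] at this; exact this
  have h2 := hulc k
  have h3 := step_ineq u hunonneg hulc huniz k
  have A := mul_le_mul_of_nonneg_left h2 (mul_nonneg hlam hlam)
  have B := mul_le_mul_of_nonneg_left h1 (mul_nonneg hmu hmu)
  have C := mul_le_mul_of_nonneg_left h3 (mul_nonneg hlam hmu)
  simp only [Lop]
  have e1 : k - 1 - 1 = k - 2 := by ring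
  have e2 : k + 1 - 1 = k := by ring
  rw [e1, e2]
  nlinarith [A, B, C]

lemma Lop_nonneg (lam mu : ℝ) (hlam : 0 ≤ lam) (hmu : 0 ≤ mu)
    (u : ℤ → ℝ) (hunonneg : ∀ k, 0 ≤ u k) (k : ℤ) : 0 ≤ Lop lam mu u k :=
  add_nonneg (mul_nonneg hlam (hunonneg _)) (mul_nonneg hmu (hunonneg _))

lemma Lop_niz (lam mu : ℝ) (hlam : 0 ≤ lam) (hmu : 0 ≤ mu)
    (u : ℤ → ℝ) (hunonneg : ∀ k, 0 ≤ u k)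
    (huniz : ∀ i j k : ℤ, i < j → j < k → u i ≠ 0 → u k ≠ 0 → u j ≠ 0) :
    ∀ i j k : ℤ, i < j → j < k → Lop lam mu u i ≠ 0 → Lop lam mu u k ≠ 0 →
      Lop lam mu u j ≠ 0 := by
  intro i j k hij hjk hi hk hj
  have zsum : ∀ m : ℤ, Lop lam mu u m = 0 → lam * u m = 0 ∧ mu * u (m - 1) = 0 := by
    intro m hm
    have h1 := mul_nonneg hlam (hunonneg m)
    have h2 := mul_nonneg hmu (hunonneg (m - 1))
    constructor <;> [skip; skip] <;> simp only [Lop] at hm <;> linarith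
  have nzsum : ∀ m : ℤ, Lop lam mu u m ≠ 0 → lam * u m ≠ 0 ∨ mu * u (m - 1) ≠ 0 := by
    intro m hm
    by_contra h
    push_neg at h
    apply hm
    simp only [Lop, h.1, h.2, add_zero]
  obtain ⟨hj1, hj2⟩ := zsum j hj
  rcases nzsum i hi with hli | hmi
  · have hlne : lam ≠ 0 := fun h => hli (by rw [h, zero_mul])
    have hui : u i ≠ 0 := fun h => hli (by rw [h, mul_zero])
    have huj : u j = 0 := by
      rcases mul_eq_zero.1 hj1 with h | h
      · exact absurd h hlne
      · exact h
    rcases nzsum k hk with hlk | hmk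
    · have huk : u k ≠ 0 := fun h => hlk (by rw [h, mul_zero])
      exact (huniz i j k hij hjk hui huk) huj
    · have huk : u (k - 1) ≠ 0 := fun h => hmk (by rw [h, mul_zero])
      rcases lt_or_eq_of_le (by omega : j ≤ k - 1) with h | h
      · exact (huniz i j (k - 1) hij h hui huk) huj
      · exact huk (h ▸ huj)
  · have hmne : mu ≠ 0 := fun h => hmi (by rw [h, zero_mul])
    have hui : u (i - 1) ≠ 0 := fun h => hmi (by rw [h, mul_zero])
    have huj : u (j - 1) = 0 := by
      rcases mul_eq_zero.1 hj2 with h | h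
      · exact absurd h hmne
      · exact h
    rcases nzsum k hk with hlk | hmk
    · have huk : u k ≠ 0 := fun h => hlk (by rw [h, mul_zero])
      exact (huniz (i - 1) (j - 1) k (by omega) (by omega) hui huk) huj
    · have huk : u (k - 1) ≠ 0 := fun h => hmk (by rw [h, mul_zero])
      exact (huniz (i - 1) (j - 1) (k - 1) (by omega) (by omega) hui huk) huj

/-- if `λ, μ ≥ 0` and `u : ℤ → ℝ` is a nonnegative log-concave
sequence (with no internal zeros), then `ℒ(u)` is log-concave, and consequently
`ℒⁿ(u)` is log-concave for every `n ≥ 0`. -/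
theorem stmt_12 (lam mu : ℝ) (hlam : 0 ≤ lam) (hmu : 0 ≤ mu)
    (u : ℤ → ℝ)
    (hunonneg : ∀ k, 0 ≤ u k)
    (hulc : ∀ k : ℤ, u (k - 1) * u (k + 1) ≤ u k ^ 2)
    (huniz : ∀ i j k : ℤ, i < j → j < k → u i ≠ 0 → u k ≠ 0 → u j ≠ 0) :
    (∀ k : ℤ, Lop lam mu u (k - 1) * Lop lam mu u (k + 1) ≤ (Lop lam mu u k) ^ 2) ∧
    (∀ n : ℕ, ∀ k : ℤ,
      ((Lop lam mu)^[n] u) (k - 1) * ((Lop lam mu)^[n] u) (k + 1) ≤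
        (((Lop lam mu)^[n] u) k) ^ 2) := by
  have main : ∀ n : ℕ,
      (∀ k, 0 ≤ ((Lop lam mu)^[n] u) k) ∧
      (∀ k : ℤ, ((Lop lam mu)^[n] u) (k - 1) * ((Lop lam mu)^[n] u) (k + 1) ≤
        (((Lop lam mu)^[n] u) k) ^ 2) ∧
      (∀ i j k : ℤ, i < j → j < k → ((Lop lam mu)^[n] u) i ≠ 0 →
        ((Lop lam mu)^[n] u) k ≠ 0 → ((Lop lam mu)^[n] u) j ≠ 0) := by
    intro n
    induction n with
    | zero => exact ⟨hunonneg, hulc, huniz⟩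
    | succ m ih =>
      obtain ⟨h1, h2, h3⟩ := ih
      rw [Function.iterate_succ_apply']
      exact ⟨Lop_nonneg lam mu hlam hmu _ h1,
        Lop_lc lam mu hlam hmu _ h1 h2 h3,
        Lop_niz lam mu hlam hmu _ h1 h3⟩
  exact ⟨Lop_lc lam mu hlam hmu u hunonneg hulc huniz, fun n => (main n).2.1⟩
end

section
/- Let $\lambda, \mu \ge 0$, let $\{a_k\}_{k \in \mathbb{Z}}$ be a log-concave sequence of nonnegative reals, and define $a(n,k) = \lambda a_k + \mu a_{k-1}$, $a(n+1,k) = \lambda a(n,k) + \mu a(n,k-1)$ with $a(n-1,k) = a_k$. Then for $0 \le r \le n$, with $\mathscr{A}_r(m;q) = \sum_{k=r}^m a(m,k)q^k$: $\mathscr{A}_r(n;q)^2 - \mathscr{A}_r(n-1;q)\mathscr{A}_r(n+1;q) = \lambda^2\sum_{k=r+1}^n (a_k a_n - a_{k-1}a_{n+1})q^{n+k} + \mu^2\sum_{k=r}^n (a_{r-1}a_{k-1} - a_{r-2}a_k)q^{k+r} + (\lambda^2 a_r + 2\lambda\mu a_{r-1} + \mu^2 a_{r-2})a_n q^{n+r}$,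 and every coefficient on the right-hand side is nonnegative. -/
open Polynomial Finset

/-- auxiliary: one/two-step log-concavity extension. -/
lemma lc_step_aux (a : ℤ → ℝ)
    (hanonneg : ∀ k, 0 ≤ a k)
    (halc : ∀ k : ℤ, a (k - 1) * a (k + 1) ≤ a k ^ 2)
    (haniz : ∀ i j k : ℤ, i < j → j < k → a i ≠ 0 → a k ≠ 0 → a j ≠ 0) :
    ∀ d : ℕ, ∀ i : ℤ, a (i - 1) * a (i + d + 1) ≤ a i * a (i + d) := by
  intro d
  induction d with
  | zero =>
    intro i
    simpa [pow_two] using halc i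
  | succ d ih =>
    intro i
    have hd1 : (i:ℤ) + (d+1:ℕ) + 1 = i + d + 2 := by push_cast; ring
    have hd2 : (i:ℤ) + (d+1:ℕ) = i + d + 1 := by push_cast; ring
    rw [hd1, hd2]
    by_cases hjj : a (i + d + 1) = 0
    · have : a (i - 1) * a (i + d + 2) = 0 := by
        by_contra h
        have h1 : a (i - 1) ≠ 0 := fun h0 => h (by rw [h0, zero_mul])
        have h2 : a (i + d + 2) ≠ 0 := fun h0 => h (by rw [h0, mul_zero])
        exact haniz (i-1) (i+d+1) (i+d+2) (by omega) (by omega) h1 h2 hjj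
      rw [this, hjj, mul_zero]
    · by_cases hmid : a (i + d) = 0
      · have h1 : a (i - 1) = 0 := by
          by_contra h1
          exact haniz (i-1) (i+d) (i+d+1) (by omega) (by omega) h1 hjj hmid
        rw [h1, zero_mul]
        exact mul_nonneg (hanonneg _) (hanonneg _)
      · have hIH := ih i
        have hlc := halc (i + d + 1)
        have e1 : i + d + 1 - 1 = i + d := by ring
        have e2 : i + d + 1 + 1 = i + d + 2 := by ring
        rw [e1, e2] at hlc
        have hm : 0 < a (i + d) := lt_of_le_of_ne (hanonneg _) (Ne.symm hmid)
        have hj : 0 < a (i + d + 1) := lt_of_le_of_ne (hanonneg _) (Ne.symm hjj)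
        nlinarith [mul_le_mul hIH hlc (mul_nonneg (hanonneg (i+d)) (hanonneg (i+d+2)))
          (mul_nonneg (hanonneg i) (hanonneg (i+d))), hanonneg (i-1), hanonneg (i+d+2),
          hanonneg i, hanonneg (i+d+1)]

/-- auxiliary: log-concavity with no internal zeros gives
`a (i-1) * a (j+1) ≤ a i * a j` for `i ≤ j`. -/
lemma lc_gen_aux (a : ℤ → ℝ)
    (hanonneg : ∀ k, 0 ≤ a k)
    (halc : ∀ k : ℤ, a (k - 1) * a (k + 1) ≤ a k ^ 2)
    (haniz : ∀ i j k : ℤ, i < j → j < k → a i ≠ 0 → a k ≠ 0 → a j ≠ 0) :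
    ∀ i j : ℤ, i ≤ j → a (i - 1) * a (j + 1) ≤ a i * a j := by
  intro i j hij
  have hd : j = i + ((j - i).toNat : ℤ) := by omega
  rw [hd]
  exact lc_step_aux a hanonneg halc haniz _ i

/-- auxiliary: the shift operator `u ↦ λ u + μ (shift u)` at polynomial level. -/
lemma op_lemma_aux (lam mu : ℝ) (f : ℤ → ℝ) (r m : ℕ) (hrm : r ≤ m) :
    (C lam + C mu * X) * (∑ k ∈ Ico r m, C (f (k : ℤ)) * X ^ k)
      + C (lam * f (m : ℤ)) * X ^ m + C (mu * f ((r : ℤ) - 1)) * X ^ r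
    = ∑ k ∈ Icc r m, C (lam * f (k : ℤ) + mu * f ((k : ℤ) - 1)) * X ^ k := by
  have hmu : ∀ k : ℕ, (C mu * X) * (C (f (k:ℤ)) * X ^ k) = C (mu * f (k:ℤ)) * X ^ (k+1) := by
    intro k; rw [C_mul, pow_succ]; ring
  have hla : ∀ k : ℕ, C lam * (C (f (k:ℤ)) * X ^ k) = C (lam * f (k:ℤ)) * X ^ k := by
    intro k; rw [C_mul]; ring
  rw [add_mul, Finset.mul_sum, Finset.mul_sum]
  rw [Finset.sum_congr rfl (fun k _ => hla k), Finset.sum_congr rfl (fun k _ => hmu k)]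
  have h2 : (∑ k ∈ Ico r m, C (mu * f (k:ℤ)) * X ^ (k+1))
      = ∑ k ∈ Ico (r+1) (m+1), C (mu * f ((k:ℤ)-1)) * X ^ k := by
    rw [show Ico (r+1) (m+1) = Finset.map (addRightEmbedding 1) (Ico r m) from
      (Finset.map_add_right_Ico _ _ _).symm, Finset.sum_map]
    apply Finset.sum_congr rfl
    intro k _
    have : ((addRightEmbedding 1 k : ℕ) : ℤ) - 1 = (k : ℤ) := by
      simp [addRightEmbedding]
    rw [this]
    rfl
  rw [h2]
  have h3 : (∑ k ∈ Ico (r+1) (m+1), C (mu * f ((k:ℤ)-1)) * X ^ k) + C (mu * f ((r:ℤ)-1)) * X ^ r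
      = ∑ k ∈ Ico r (m+1), C (mu * f ((k:ℤ)-1)) * X ^ k := by
    rw [Finset.sum_eq_sum_Ico_succ_bot (by omega : r < m + 1)
      (fun k => C (mu * f ((k:ℤ)-1)) * X ^ k)]
    ring
  have h1 : (∑ k ∈ Ico r m, C (lam * f (k:ℤ)) * X ^ k) + C (lam * f (m:ℤ)) * X ^ m
      = ∑ k ∈ Ico r (m+1), C (lam * f (k:ℤ)) * X ^ k := by
    rw [Finset.sum_Ico_succ_top hrm]
  calc (∑ k ∈ Ico r m, C (lam * f (k:ℤ)) * X ^ k)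
        + (∑ k ∈ Ico (r+1) (m+1), C (mu * f ((k:ℤ)-1)) * X ^ k)
        + C (lam * f (m:ℤ)) * X ^ m + C (mu * f ((r:ℤ)-1)) * X ^ r
      = ((∑ k ∈ Ico r m, C (lam * f (k:ℤ)) * X ^ k) + C (lam * f (m:ℤ)) * X ^ m)
        + ((∑ k ∈ Ico (r+1) (m+1), C (mu * f ((k:ℤ)-1)) * X ^ k)
            + C (mu * f ((r:ℤ)-1)) * X ^ r) := by ring
    _ = (∑ k ∈ Ico r (m+1), C (lam * f (k:ℤ)) * X ^ k)
        + ∑ k ∈ Ico r (m+1), C (mu * f ((k:ℤ)-1)) * X ^ k := by rw [h1, h3]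
    _ = ∑ k ∈ Ico r (m+1), (C (lam * f (k:ℤ)) * X ^ k + C (mu * f ((k:ℤ)-1)) * X ^ k) := by
        rw [Finset.sum_add_distrib]
    _ = ∑ k ∈ Icc r m, C (lam * f (k:ℤ) + mu * f ((k:ℤ)-1)) * X ^ k := by
        rw [Finset.Ico_add_one_right_eq_Icc]
        exact Finset.sum_congr rfl (fun k _ => by rw [C_add]; ring)

/-- auxiliary: the middle row as a sequence. -/
def bfun (lam mu : ℝ) (a : ℤ → ℝ) : ℤ → ℝ := fun k => lam * a k + mu * a (k - 1)

/-- formula (6): for `λ, μ ≥ 0` and a nonnegative log-concave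
sequence `a : ℤ → ℝ` (no internal zeros), with rows
`a(n-1,k) = a_k`, `a(n,k) = λ a_k + μ a_{k-1}`,
`a(n+1,k) = λ a(n,k) + μ a(n,k-1)`, and
`𝒜_r(m;q) = ∑_{k=r}^m a(m,k) q^k`, for `0 ≤ r ≤ n` one has
`𝒜_r(n)^2 - 𝒜_r(n-1) 𝒜_r(n+1)
  = λ² ∑_{k=r+1}^n (a_k a_n - a_{k-1} a_{n+1}) q^{n+k}
  + μ² ∑_{k=r}^n (a_{r-1} a_{k-1} - a_{r-2} a_k) q^{k+r}
  + (λ² a_r + 2λμ a_{r-1} + μ² a_{r-2}) a_n q^{n+r}`,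
and every coefficient appearing on the right-hand side is nonnegative. -/
theorem stmt_14 (lam mu : ℝ) (hlam : 0 ≤ lam) (hmu : 0 ≤ mu)
    (a : ℤ → ℝ)
    (hanonneg : ∀ k, 0 ≤ a k)
    (halc : ∀ k : ℤ, a (k - 1) * a (k + 1) ≤ a k ^ 2)
    (haniz : ∀ i j k : ℤ, i < j → j < k → a i ≠ 0 → a k ≠ 0 → a j ≠ 0)
    (r n : ℕ) (hrn : r ≤ n)
    (Aprev Acur Anext : ℝ[X])
    (hAprev : Aprev = ∑ k ∈ Ico r n, Polynomial.C (a (k : ℤ)) * X ^ k)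
    (hAcur : Acur = ∑ k ∈ Icc r n,
      Polynomial.C (lam * a (k : ℤ) + mu * a ((k : ℤ) - 1)) * X ^ k)
    (hAnext : Anext = ∑ k ∈ Icc r (n + 1),
      Polynomial.C (lam * (lam * a (k : ℤ) + mu * a ((k : ℤ) - 1)) +
        mu * (lam * a ((k : ℤ) - 1) + mu * a ((k : ℤ) - 2))) * X ^ k) :
    Acur ^ 2 - Aprev * Anext =
      (∑ k ∈ Icc (r + 1) n,
        Polynomial.C (lam ^ 2 * (a (k : ℤ) * a (n : ℤ) - a ((k : ℤ) - 1) * a ((n : ℤ) + 1))) *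
          X ^ (n + k)) +
      (∑ k ∈ Icc r n,
        Polynomial.C (mu ^ 2 * (a ((r : ℤ) - 1) * a ((k : ℤ) - 1) -
          a ((r : ℤ) - 2) * a (k : ℤ))) * X ^ (k + r)) +
      Polynomial.C ((lam ^ 2 * a (r : ℤ) + 2 * lam * mu * a ((r : ℤ) - 1) +
        mu ^ 2 * a ((r : ℤ) - 2)) * a (n : ℤ)) * X ^ (n + r) ∧
    (∀ k ∈ Icc (r + 1) n, 0 ≤ a (k : ℤ) * a (n : ℤ) - a ((k : ℤ) - 1) * a ((n : ℤ) + 1)) ∧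
    (∀ k ∈ Icc r n, 0 ≤ a ((r : ℤ) - 1) * a ((k : ℤ) - 1) - a ((r : ℤ) - 2) * a (k : ℤ)) ∧
    0 ≤ (lam ^ 2 * a (r : ℤ) + 2 * lam * mu * a ((r : ℤ) - 1) +
      mu ^ 2 * a ((r : ℤ) - 2)) * a (n : ℤ) := by
  have lcg := lc_gen_aux a hanonneg halc haniz
  refine ⟨?_, ?_, ?_, ?_⟩
  · -- the polynomial identity
    -- step 1: recursion for Acur
    have e1 : (C lam + C mu * X) * Aprev + C (lam * a (n:ℤ)) * X ^ n
        + C (mu * a ((r:ℤ) - 1)) * X ^ r = Acur := by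
      rw [hAprev, hAcur]; exact op_lemma_aux lam mu a r n hrn
    -- step 2: recursion for Anext
    have hAcur' : Acur = ∑ k ∈ Ico r (n+1), C (bfun lam mu a (k : ℤ)) * X ^ k := by
      rw [hAcur, ← Finset.Ico_add_one_right_eq_Icc]; rfl
    have e2 : (C lam + C mu * X) * Acur + C (lam * bfun lam mu a ((n:ℤ)+1)) * X ^ (n+1)
        + C (mu * bfun lam mu a ((r:ℤ) - 1)) * X ^ r = Anext := by
      have h := op_lemma_aux lam mu (bfun lam mu a) r (n+1) (by omega)
      rw [← hAcur'] at h
      rw [hAnext]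
      have hcast : ((n+1 : ℕ) : ℤ) = (n : ℤ) + 1 := by push_cast; ring
      rw [hcast] at h
      rw [h]
      apply Finset.sum_congr rfl
      intro k _
      simp only [bfun]
      have : (k:ℤ) - 1 - 1 = (k:ℤ) - 2 := by ring
      rw [this]
    -- step 3: reduce to boundary products
    have hmain : Acur ^ 2 - Aprev * Anext
        = Acur * (C (lam * a (n:ℤ)) * X ^ n) + Acur * (C (mu * a ((r:ℤ)-1)) * X ^ r)
          - Aprev * (C (lam * bfun lam mu a ((n:ℤ)+1)) * X ^ (n+1))
          - Aprev * (C (mu * bfun lam mu a ((r:ℤ)-1)) * X ^ r) := by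
      linear_combination (-Acur) * e1 + Aprev * e2
    -- step 4: expand the four boundary products as sums
    have h1 : Acur * (C (lam * a (n:ℤ)) * X ^ n)
        = ∑ k ∈ Icc r n, C (lam * a (n:ℤ) * (lam * a (k:ℤ) + mu * a ((k:ℤ)-1)))
            * X ^ (n + k) := by
      rw [hAcur, Finset.sum_mul]
      exact Finset.sum_congr rfl (fun k _ => by simp only [C_mul, C_add, pow_add]; ring)
    have h2 : Acur * (C (mu * a ((r:ℤ)-1)) * X ^ r)
        = ∑ k ∈ Icc r n, C (mu * a ((r:ℤ)-1) * (lam * a (k:ℤ) + mu * a ((k:ℤ)-1)))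
            * X ^ (k + r) := by
      rw [hAcur, Finset.sum_mul]
      exact Finset.sum_congr rfl (fun k _ => by simp only [C_mul, C_add, pow_add]; ring)
    have h3 : Aprev * (C (lam * bfun lam mu a ((n:ℤ)+1)) * X ^ (n+1))
        = ∑ k ∈ Ico r n, C (lam * (lam * a ((n:ℤ)+1) + mu * a (n:ℤ)) * a (k:ℤ))
            * X ^ (n + 1 + k) := by
      rw [hAprev, Finset.sum_mul]
      apply Finset.sum_congr rfl
      intro k _
      simp only [bfun, add_sub_cancel_right, C_mul, C_add, pow_add]; ring
    have h4 : Aprev * (C (mu * bfun lam mu a ((r:ℤ)-1)) * X ^ r)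
        = ∑ k ∈ Ico r n, C (mu * (lam * a ((r:ℤ)-1) + mu * a ((r:ℤ)-2)) * a (k:ℤ))
            * X ^ (k + r) := by
      rw [hAprev, Finset.sum_mul]
      apply Finset.sum_congr rfl
      intro k _
      simp only [bfun]
      rw [show (r:ℤ) - 1 - 1 = (r:ℤ) - 2 from by ring]
      simp only [C_mul, C_add, pow_add]; ring
    -- step 5: family A
    have reidx : (∑ k ∈ Ico r n, C (lam * (lam * a ((n:ℤ)+1) + mu * a (n:ℤ)) * a (k:ℤ))
            * X ^ (n + 1 + k))
        = ∑ k ∈ Icc (r+1) n, C (lam * (lam * a ((n:ℤ)+1) + mu * a (n:ℤ)) * a ((k:ℤ)-1))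
            * X ^ (n + k) := by
      rw [← Finset.Ico_add_one_right_eq_Icc,
        show Ico (r+1) (n+1) = Finset.map (addRightEmbedding 1) (Ico r n) from
          (Finset.map_add_right_Ico _ _ _).symm, Finset.sum_map]
      apply Finset.sum_congr rfl
      intro k _
      have hh1 : ((addRightEmbedding 1 k : ℕ):ℤ) - 1 = (k:ℤ) := by simp [addRightEmbedding]
      have hh2 : n + (addRightEmbedding 1 k : ℕ) = n + 1 + k := by
        simp only [addRightEmbedding, Function.Embedding.coeFn_mk]; omega
      rw [hh1, hh2]
    have splitA : (∑ k ∈ Icc r n, C (lam * a (n:ℤ) * (lam * a (k:ℤ) + mu * a ((k:ℤ)-1)))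
            * X ^ (n + k))
        = C (lam * a (n:ℤ) * (lam * a (r:ℤ) + mu * a ((r:ℤ)-1))) * X ^ (n + r)
          + ∑ k ∈ Icc (r+1) n, C (lam * a (n:ℤ) * (lam * a (k:ℤ) + mu * a ((k:ℤ)-1)))
              * X ^ (n + k) := by
      rw [← Finset.Ico_add_one_right_eq_Icc, ← Finset.Ico_add_one_right_eq_Icc,
        Finset.sum_eq_sum_Ico_succ_bot (by omega : r < n+1)]
    have famA : (∑ k ∈ Icc r n, C (lam * a (n:ℤ) * (lam * a (k:ℤ) + mu * a ((k:ℤ)-1)))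
            * X ^ (n + k))
        - (∑ k ∈ Ico r n, C (lam * (lam * a ((n:ℤ)+1) + mu * a (n:ℤ)) * a (k:ℤ))
            * X ^ (n + 1 + k))
        = (∑ k ∈ Icc (r + 1) n,
            C (lam ^ 2 * (a (k : ℤ) * a (n : ℤ) - a ((k : ℤ) - 1) * a ((n : ℤ) + 1)))
              * X ^ (n + k))
          + C ((lam ^ 2 * a (r:ℤ) + lam * mu * a ((r:ℤ)-1)) * a (n:ℤ)) * X ^ (n + r) := by
      rw [reidx, splitA]
      have hsub : (∑ k ∈ Icc (r+1) n,
            C (lam * a (n:ℤ) * (lam * a (k:ℤ) + mu * a ((k:ℤ)-1))) * X ^ (n + k))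
          - (∑ k ∈ Icc (r+1) n,
            C (lam * (lam * a ((n:ℤ)+1) + mu * a (n:ℤ)) * a ((k:ℤ)-1)) * X ^ (n + k))
          = ∑ k ∈ Icc (r + 1) n,
              C (lam ^ 2 * (a (k : ℤ) * a (n : ℤ) - a ((k : ℤ) - 1) * a ((n : ℤ) + 1)))
                * X ^ (n + k) := by
        rw [← Finset.sum_sub_distrib]
        apply Finset.sum_congr rfl
        intro k _
        rw [← sub_mul, ← C_sub]
        exact congrArg (· * X ^ (n + k)) (congrArg C (by ring))
      have hterm : C (lam * a (n:ℤ) * (lam * a (r:ℤ) + mu * a ((r:ℤ)-1))) * X ^ (n + r)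
          = C ((lam ^ 2 * a (r:ℤ) + lam * mu * a ((r:ℤ)-1)) * a (n:ℤ)) * X ^ (n + r) :=
        congrArg (· * X ^ (n + r)) (congrArg C (by ring))
      linear_combination hsub + hterm
    -- step 6: family B
    have splitB1 : (∑ k ∈ Icc r n, C (mu * a ((r:ℤ)-1) * (lam * a (k:ℤ) + mu * a ((k:ℤ)-1)))
            * X ^ (k + r))
        = (∑ k ∈ Ico r n, C (mu * a ((r:ℤ)-1) * (lam * a (k:ℤ) + mu * a ((k:ℤ)-1)))
            * X ^ (k + r))
          + C (mu * a ((r:ℤ)-1) * (lam * a (n:ℤ) + mu * a ((n:ℤ)-1))) * X ^ (n + r) := by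
      rw [← Finset.Ico_add_one_right_eq_Icc, Finset.sum_Ico_succ_top hrn]
    have splitB2 : (∑ k ∈ Icc r n,
          C (mu ^ 2 * (a ((r : ℤ) - 1) * a ((k : ℤ) - 1) - a ((r : ℤ) - 2) * a (k : ℤ)))
            * X ^ (k + r))
        = (∑ k ∈ Ico r n,
          C (mu ^ 2 * (a ((r : ℤ) - 1) * a ((k : ℤ) - 1) - a ((r : ℤ) - 2) * a (k : ℤ)))
            * X ^ (k + r))
          + C (mu ^ 2 * (a ((r : ℤ) - 1) * a ((n : ℤ) - 1) - a ((r : ℤ) - 2) * a (n : ℤ)))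
            * X ^ (n + r) := by
      rw [← Finset.Ico_add_one_right_eq_Icc, Finset.sum_Ico_succ_top hrn]
    have famB : (∑ k ∈ Icc r n, C (mu * a ((r:ℤ)-1) * (lam * a (k:ℤ) + mu * a ((k:ℤ)-1)))
            * X ^ (k + r))
        - (∑ k ∈ Ico r n, C (mu * (lam * a ((r:ℤ)-1) + mu * a ((r:ℤ)-2)) * a (k:ℤ))
            * X ^ (k + r))
        = (∑ k ∈ Icc r n,
            C (mu ^ 2 * (a ((r : ℤ) - 1) * a ((k : ℤ) - 1) - a ((r : ℤ) - 2) * a (k : ℤ)))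
              * X ^ (k + r))
          + C ((lam * mu * a ((r:ℤ)-1) + mu ^ 2 * a ((r:ℤ)-2)) * a (n:ℤ)) * X ^ (n + r) := by
      rw [splitB1, splitB2]
      have hsub : (∑ k ∈ Ico r n,
            C (mu * a ((r:ℤ)-1) * (lam * a (k:ℤ) + mu * a ((k:ℤ)-1))) * X ^ (k + r))
          - (∑ k ∈ Ico r n,
            C (mu * (lam * a ((r:ℤ)-1) + mu * a ((r:ℤ)-2)) * a (k:ℤ)) * X ^ (k + r))
          = ∑ k ∈ Ico r n,
              C (mu ^ 2 * (a ((r : ℤ) - 1) * a ((k : ℤ) - 1) - a ((r : ℤ) - 2) * a (k : ℤ)))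
                * X ^ (k + r) := by
        rw [← Finset.sum_sub_distrib]
        apply Finset.sum_congr rfl
        intro k _
        rw [← sub_mul, ← C_sub]
        exact congrArg (· * X ^ (k + r)) (congrArg C (by ring))
      have hterm : C (mu * a ((r:ℤ)-1) * (lam * a (n:ℤ) + mu * a ((n:ℤ)-1))) * X ^ (n + r)
          = C (mu ^ 2 * (a ((r : ℤ) - 1) * a ((n : ℤ) - 1) - a ((r : ℤ) - 2) * a (n : ℤ)))
              * X ^ (n + r)
            + C ((lam * mu * a ((r:ℤ)-1) + mu ^ 2 * a ((r:ℤ)-2)) * a (n:ℤ)) * X ^ (n + r) := by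
        rw [← add_mul, ← C_add]
        exact congrArg (· * X ^ (n + r)) (congrArg C (by ring))
      linear_combination hsub + hterm
    -- step 7: combine the leftover boundary terms
    have hT : C ((lam ^ 2 * a (r:ℤ) + lam * mu * a ((r:ℤ)-1)) * a (n:ℤ)) * X ^ (n + r)
        + C ((lam * mu * a ((r:ℤ)-1) + mu ^ 2 * a ((r:ℤ)-2)) * a (n:ℤ)) * X ^ (n + r)
        = C ((lam ^ 2 * a (r : ℤ) + 2 * lam * mu * a ((r : ℤ) - 1) +
            mu ^ 2 * a ((r : ℤ) - 2)) * a (n : ℤ)) * X ^ (n + r) := by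
      rw [← add_mul, ← C_add]
      exact congrArg (· * X ^ (n + r)) (congrArg C (by ring))
    rw [hmain, h1, h2, h3, h4]
    linear_combination famA + famB + hT
  · -- nonnegativity of the first family of coefficients
    intro k hk
    rw [Finset.mem_Icc] at hk
    have h := lcg (k:ℤ) (n:ℤ) (by exact_mod_cast hk.2)
    linarith
  · -- nonnegativity of the second family of coefficients
    intro k hk
    rw [Finset.mem_Icc] at hk
    have h := lcg ((r:ℤ) - 1) ((k:ℤ) - 1) (by
      have : (r:ℤ) ≤ (k:ℤ) := by exact_mod_cast hk.1
      omega)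
    rw [show (r:ℤ) - 1 - 1 = (r:ℤ) - 2 from by ring,
      show (k:ℤ) - 1 + 1 = (k:ℤ) from by ring] at h
    linarith
  · -- nonnegativity of the last coefficient
    apply mul_nonneg _ (hanonneg _)
    have h1 : 0 ≤ lam ^ 2 * a (r:ℤ) := mul_nonneg (pow_nonneg hlam 2) (hanonneg _)
    have h2 : 0 ≤ 2 * lam * mu * a ((r:ℤ) - 1) :=
      mul_nonneg (mul_nonneg (by linarith) hmu) (hanonneg _)
    have h3 : 0 ≤ mu ^ 2 * a ((r:ℤ) - 2) := mul_nonneg (pow_nonneg hmu 2) (hanonneg _)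
    linarith
end

section
/- If the sequences $\{x_n\}_{n\ge 0}$ and $\{y_n\}_{n\ge 0}$ of nonnegative reals are log-concave (with no internal zeros), then so is their ordinary convolution $z_n = \sum_{k=0}^n x_k y_{n-k}$. -/
open Finset

/-- Extend a sequence on ℕ to ℤ by zero on negatives. -/
noncomputable def extSeq (x : ℕ → ℝ) : ℤ → ℝ := fun i => if 0 ≤ i then x i.toNat else 0

lemma extSeq_coe (x : ℕ → ℝ) (k : ℕ) : extSeq x (k : ℤ) = x k := by
  simp [extSeq]

lemma extSeq_nonneg (x : ℕ → ℝ) (h0 : ∀ k, 0 ≤ x k) (i : ℤ) : 0 ≤ extSeq x i := by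
  unfold extSeq; split
  · exact h0 _
  · exact le_rfl

lemma extSeq_neg (x : ℕ → ℝ) (i : ℤ) (h : i < 0) : extSeq x i = 0 := by
  simp [extSeq, not_le.2 h]

lemma extSeq_ne (x : ℕ → ℝ) {i : ℤ} (h : extSeq x i ≠ 0) : 0 ≤ i := by
  by_contra h'; exact h (extSeq_neg x i (by omega))

lemma glc_nat (x : ℕ → ℝ) (h0 : ∀ k, 0 ≤ x k)
    (hlc : ∀ k : ℕ, x k * x (k + 2) ≤ x (k + 1) ^ 2)
    (hniz : ∀ i j k : ℕ, i < j → j < k → x i ≠ 0 → x k ≠ 0 → x j ≠ 0) :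
    ∀ d p : ℕ, x p * x (p + d + 2) ≤ x (p + 1) * x (p + d + 1) := by
  intro d
  induction d with
  | zero => intro p; simpa [pow_two] using hlc p
  | succ d ih =>
    intro p
    have key : ∀ a b : ℕ, a = p + (d+1) + 2 → b = p + (d+1) + 1 →
        x p * x a ≤ x (p+1) * x b := by
      intro a b ha hb
      subst ha hb
      rcases eq_or_lt_of_le (h0 (p + d + 2)) with hc | hc
      · -- x (p+d+2) = 0
        have h3 : x p * x (p + (d+1) + 2) = 0 := by
          by_contra h
          have hxp : x p ≠ 0 := fun h' => h (by rw [h', zero_mul])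
          have hx3 : x (p + (d+1) + 2) ≠ 0 := fun h' => h (by rw [h', mul_zero])
          have := hniz p (p + d + 2) (p + (d+1) + 2) (by omega) (by omega) hxp
            (by convert hx3 using 2)
          exact this hc.symm
        have : x (p + (d+1) + 1) = x (p + d + 2) := by rw [show p + (d+1) + 1 = p + d + 2 from by omega]
        rw [h3, this, ← hc, mul_zero]
      · -- x (p+d+2) > 0
        have h1 := ih p
        have h2 := hlc (p + d + 1)
        -- x (p+d+1) * x (p+d+3) ≤ x (p+d+2)^2
        have e2 : p + d + 1 + 2 = p + (d+1) + 2 := by omega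
        have e3 : p + d + 1 + 1 = p + d + 2 := by omega
        rw [e2, e3] at h2
        -- chain
        have step1 : x p * x (p + (d+1) + 2) * x (p + d + 2)
            ≤ x (p+1) * x (p + d + 1) * x (p + (d+1) + 2) := by
          have := mul_le_mul_of_nonneg_right h1 (h0 (p + (d+1) + 2))
          nlinarith [h0 (p + (d+1) + 2), h0 p, h0 (p+d+2)]
        have step2 : x (p+1) * x (p + d + 1) * x (p + (d+1) + 2)
            ≤ x (p+1) * x (p + d + 2) ^ 2 := by
          have := mul_le_mul_of_nonneg_left h2 (h0 (p+1))
          nlinarith [h0 (p+1)]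
        have hfin : x p * x (p + (d+1) + 2) * x (p + d + 2)
            ≤ (x (p+1) * x (p + d + 2)) * x (p + d + 2) := by
          calc x p * x (p + (d+1) + 2) * x (p + d + 2)
              ≤ x (p+1) * x (p + d + 2) ^ 2 := le_trans step1 step2
            _ = (x (p+1) * x (p + d + 2)) * x (p + d + 2) := by ring
        have e4 : p + (d+1) + 1 = p + d + 2 := by omega
        rw [e4]
        exact le_of_mul_le_mul_right hfin hc
    exact key _ _ rfl rfl

lemma glc_int (x : ℕ → ℝ) (h0 : ∀ k, 0 ≤ x k)
    (hlc : ∀ k : ℕ, x k * x (k + 2) ≤ x (k + 1) ^ 2)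
    (hniz : ∀ i j k : ℕ, i < j → j < k → x i ≠ 0 → x k ≠ 0 → x j ≠ 0) :
    ∀ a b : ℤ, a ≤ b → extSeq x (a - 1) * extSeq x (b + 1) ≤ extSeq x a * extSeq x b := by
  intro a b hab
  by_cases ha : a ≤ 0
  · rw [extSeq_neg x (a-1) (by omega), zero_mul]
    exact mul_nonneg (extSeq_nonneg x h0 a) (extSeq_nonneg x h0 b)
  · push_neg at ha
    set p := (a - 1).toNat with hpdef
    set d := (b - a).toNat with hddef
    have hp : (p : ℤ) = a - 1 := Int.toNat_of_nonneg (by omega)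
    have hd : (d : ℤ) = b - a := Int.toNat_of_nonneg (by omega)
    have e1 : a - 1 = ((p : ℕ) : ℤ) := hp.symm
    have e2 : b + 1 = ((p + d + 2 : ℕ) : ℤ) := by push_cast; omega
    have e3 : a = ((p + 1 : ℕ) : ℤ) := by push_cast; omega
    have e4 : b = ((p + d + 1 : ℕ) : ℤ) := by push_cast; omega
    rw [e1, e2, e3, e4, extSeq_coe, extSeq_coe, extSeq_coe, extSeq_coe]
    exact glc_nat x h0 hlc hniz d p

lemma supp_congr {f : ℤ × ℤ → ℝ} {s1 s2 : Finset (ℤ × ℤ)}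
    (h : ∀ p, f p ≠ 0 → (p ∈ s1 ↔ p ∈ s2)) :
    ∑ p ∈ s1, f p = ∑ p ∈ s2, f p := by
  have h1 : ∑ p ∈ s1 ∩ s2, f p = ∑ p ∈ s1, f p := by
    apply sum_subset (inter_subset_left)
    intro p hp hnp
    by_contra hf
    exact hnp (mem_inter.2 ⟨hp, (h p hf).1 hp⟩)
  have h2 : ∑ p ∈ s1 ∩ s2, f p = ∑ p ∈ s2, f p := by
    apply sum_subset (inter_subset_right)
    intro p hp hnp
    by_contra hf
    exact hnp (mem_inter.2 ⟨(h p hf).2 hp, hp⟩)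
  rw [← h1, h2]

/-- Corollary 3.3: the ordinary convolution of two nonnegative
log-concave sequences (with no internal zeros) is log-concave. -/
theorem stmt_15 (x y : ℕ → ℝ)
    (hxnonneg : ∀ k, 0 ≤ x k) (hynonneg : ∀ k, 0 ≤ y k)
    (hxlc : ∀ k : ℕ, x k * x (k + 2) ≤ x (k + 1) ^ 2)
    (hylc : ∀ k : ℕ, y k * y (k + 2) ≤ y (k + 1) ^ 2)
    (hxniz : ∀ i j k : ℕ, i < j → j < k → x i ≠ 0 → x k ≠ 0 → x j ≠ 0)
    (hyniz : ∀ i j k : ℕ, i < j → j < k → y i ≠ 0 → y k ≠ 0 → y j ≠ 0)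
    (z : ℕ → ℝ)
    (hz : ∀ n : ℕ, z n = ∑ k ∈ Finset.range (n + 1), x k * y (n - k)) :
    ∀ n : ℕ, z n * z (n + 2) ≤ z (n + 1) ^ 2 := by
  intro n
  have hX0 : ∀ i, 0 ≤ extSeq x i := extSeq_nonneg x hxnonneg
  have hY0 : ∀ i, 0 ≤ extSeq y i := extSeq_nonneg y hynonneg
  have hGX := glc_int x hxnonneg hxlc hxniz
  have hGY := glc_int y hynonneg hylc hyniz
  set H : Finset ℤ := Finset.Icc (-5) ((n : ℤ) + 5) with hH
  set P : Finset (ℤ × ℤ) := H ×ˢ H with hP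
  set f : ℤ × ℤ → ℝ := fun p =>
    extSeq x p.1 * extSeq y ((n:ℤ) + 1 - p.1) * (extSeq x p.2 * extSeq y ((n:ℤ) + 1 - p.2))
    with hf
  set g : ℤ × ℤ → ℝ := fun p =>
    extSeq x p.1 * extSeq y ((n:ℤ) - p.1) * (extSeq x p.2 * extSeq y ((n:ℤ) + 2 - p.2))
    with hg
  set pf : ℤ × ℤ → ℝ := fun p =>
    extSeq x (p.1 + 1) * extSeq x (p.2 - 1) * (extSeq y ((n:ℤ) + 1 - p.1) * extSeq y ((n:ℤ) + 1 - p.2))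
    with hpf
  set qf : ℤ × ℤ → ℝ := fun p =>
    extSeq x (p.1 + 1) * extSeq x (p.2 - 1) * (extSeq y ((n:ℤ) - p.1) * extSeq y ((n:ℤ) + 2 - p.2))
    with hqf
  set t : ℤ × ℤ → ℝ := fun p =>
    (extSeq x p.1 * extSeq x p.2 - extSeq x (p.1 + 1) * extSeq x (p.2 - 1)) *
      (extSeq y ((n:ℤ) + 1 - p.1) * extSeq y ((n:ℤ) + 1 - p.2) -
        extSeq y ((n:ℤ) - p.1) * extSeq y ((n:ℤ) + 2 - p.2))
    with ht
  -- conversion between ℕ-indexed and ℤ-indexed convolution sums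
  have hconv : ∀ r : ℕ, (r : ℤ) ≤ (n : ℤ) + 5 →
      z r = ∑ i ∈ H, extSeq x i * extSeq y ((r : ℤ) - i) := by
    intro r hr
    rw [hz r]
    have h1 : ∑ i ∈ H, extSeq x i * extSeq y ((r : ℤ) - i)
        = ∑ i ∈ Finset.Icc (0 : ℤ) (r : ℤ), extSeq x i * extSeq y ((r : ℤ) - i) := by
      symm
      apply Finset.sum_subset
      · rw [hH]; exact Finset.Icc_subset_Icc (by norm_num) hr
      · intro i hi hni
        rw [Finset.mem_Icc] at hni
        push_neg at hni
        by_cases h0i : 0 ≤ i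
        · rw [extSeq_neg y _ (by specialize hni h0i; omega), mul_zero]
        · rw [extSeq_neg x i (by omega), zero_mul]
    rw [h1]
    refine Finset.sum_nbij' (fun k : ℕ => (k : ℤ)) (fun i : ℤ => i.toNat) ?_ ?_ ?_ ?_ ?_
    · intro a ha
      simp only [Finset.mem_range] at ha
      simp only [Finset.mem_Icc]
      omega
    · intro a ha
      simp only [Finset.mem_Icc] at ha
      simp only [Finset.mem_range]
      omega
    · intro a _; simp
    · intro a ha
      simp only [Finset.mem_Icc] at ha
      show ((a.toNat : ℤ)) = a
      omega
    · intro k hk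
      simp only [Finset.mem_range] at hk
      rw [extSeq_coe, show ((r:ℤ) - (k:ℤ)) = (((r - k : ℕ)) : ℤ) by omega, extSeq_coe]
  have hz1 : z (n+1) = ∑ i ∈ H, extSeq x i * extSeq y ((n:ℤ) + 1 - i) := by
    have h1 := hconv (n+1) (by push_cast; omega)
    push_cast at h1
    exact h1
  have hz0 : z n = ∑ i ∈ H, extSeq x i * extSeq y ((n:ℤ) - i) := hconv n (by omega)
  have hz2 : z (n+2) = ∑ i ∈ H, extSeq x i * extSeq y ((n:ℤ) + 2 - i) := by
    have h1 := hconv (n+2) (by push_cast; omega)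
    push_cast at h1
    exact h1
  -- square and product as double sums
  have hA : z (n+1) ^ 2 = ∑ p ∈ P, f p := by
    rw [pow_two, hz1, Finset.sum_mul_sum, ← Finset.sum_product', ← hP]
  have hB : z n * z (n+2) = ∑ p ∈ P, g p := by
    rw [hz0, hz2, Finset.sum_mul_sum, ← Finset.sum_product', ← hP]
  -- support bounds
  have hfs : ∀ p : ℤ × ℤ, f p ≠ 0 →
      0 ≤ p.1 ∧ p.1 ≤ (n:ℤ) + 1 ∧ 0 ≤ p.2 ∧ p.2 ≤ (n:ℤ) + 1 := by
    intro p hp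
    simp only [hf] at hp
    have h1 : extSeq x p.1 ≠ 0 := fun h => hp (by rw [h]; ring)
    have h2 : extSeq y ((n:ℤ) + 1 - p.1) ≠ 0 := fun h => hp (by rw [h]; ring)
    have h3 : extSeq x p.2 ≠ 0 := fun h => hp (by rw [h]; ring)
    have h4 : extSeq y ((n:ℤ) + 1 - p.2) ≠ 0 := fun h => hp (by rw [h]; ring)
    have := extSeq_ne x h1
    have := extSeq_ne y h2
    have := extSeq_ne x h3
    have := extSeq_ne y h4
    omega
  have hgs : ∀ p : ℤ × ℤ, g p ≠ 0 →
      0 ≤ p.1 ∧ p.1 ≤ (n:ℤ) ∧ 0 ≤ p.2 ∧ p.2 ≤ (n:ℤ) + 2 := by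
    intro p hp
    simp only [hg] at hp
    have h1 : extSeq x p.1 ≠ 0 := fun h => hp (by rw [h]; ring)
    have h2 : extSeq y ((n:ℤ) - p.1) ≠ 0 := fun h => hp (by rw [h]; ring)
    have h3 : extSeq x p.2 ≠ 0 := fun h => hp (by rw [h]; ring)
    have h4 : extSeq y ((n:ℤ) + 2 - p.2) ≠ 0 := fun h => hp (by rw [h]; ring)
    have := extSeq_ne x h1
    have := extSeq_ne y h2
    have := extSeq_ne x h3
    have := extSeq_ne y h4
    omega
  -- the shift embedding
  have hinj : Function.Injective (fun p : ℤ × ℤ => (p.2 - 1, p.1 + 1)) := by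
    intro a b h
    simp only [Prod.mk.injEq] at h
    rw [Prod.ext_iff]
    omega
  set emb : ℤ × ℤ ↪ ℤ × ℤ := ⟨fun p => (p.2 - 1, p.1 + 1), hinj⟩ with hemb
  -- membership characterizations
  have hmemP : ∀ p : ℤ × ℤ, p ∈ P ↔
      (-5 ≤ p.1 ∧ p.1 ≤ (n:ℤ) + 5 ∧ -5 ≤ p.2 ∧ p.2 ≤ (n:ℤ) + 5) := by
    intro p
    rw [hP, Finset.mem_product, hH, Finset.mem_Icc, Finset.mem_Icc]
    tauto
  have hmemMap : ∀ q : ℤ × ℤ, (-4 ≤ q.1 ∧ q.1 ≤ (n:ℤ) + 4 ∧ -4 ≤ q.2 ∧ q.2 ≤ (n:ℤ) + 4)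
      → q ∈ P.map emb := by
    intro q hq
    rw [Finset.mem_map]
    refine ⟨(q.2 - 1, q.1 + 1), ?_, ?_⟩
    · rw [hmemP]; simp only; omega
    · simp only [hemb, Function.Embedding.coeFn_mk]
      rw [Prod.ext_iff]
      simp only
      omega
  -- named partial sums
  -- (a) split of ∑ f
  have ha : ∑ p ∈ P, f p =
      (∑ p ∈ P, if p.2 ≤ p.1 then f p else 0) + (∑ p ∈ P, if p.1 < p.2 then f p else 0) := by
    rw [← Finset.sum_add_distrib]
    refine Finset.sum_congr rfl fun p _ => ?_
    by_cases h : p.2 ≤ p.1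
    · rw [if_pos h, if_neg (by omega), add_zero]
    · rw [if_neg h, if_pos (by omega), zero_add]
  -- (b) three-way split of ∑ g
  have hb : ∑ p ∈ P, g p =
      (∑ p ∈ P, if p.2 ≤ p.1 then g p else 0) + (∑ p ∈ P, if p.1 = p.2 - 1 then g p else 0)
        + (∑ p ∈ P, if p.1 ≤ p.2 - 2 then g p else 0) := by
    rw [← Finset.sum_add_distrib, ← Finset.sum_add_distrib]
    refine Finset.sum_congr rfl fun p _ => ?_
    by_cases h1 : p.2 ≤ p.1
    · rw [if_pos h1, if_neg (by omega), if_neg (by omega)]; ring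
    · by_cases h2 : p.1 = p.2 - 1
      · rw [if_neg h1, if_pos h2, if_neg (by omega)]; ring
      · rw [if_neg h1, if_neg h2, if_pos (by omega)]; ring
  -- (c) swap symmetry for f
  have hc : (∑ p ∈ P, if p.1 < p.2 then f p else 0)
      = (∑ p ∈ P, if p.2 < p.1 then f p else 0) := by
    refine Finset.sum_nbij' (fun p : ℤ × ℤ => (p.2, p.1)) (fun p : ℤ × ℤ => (p.2, p.1))
      ?_ ?_ ?_ ?_ ?_
    · intro p hp; rw [hmemP] at hp ⊢; simp only at hp ⊢; omega
    · intro p hp; rw [hmemP] at hp ⊢; simp only at hp ⊢; omega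
    · intro p _; rfl
    · intro p _; rfl
    · intro p _
      by_cases h : p.1 < p.2
      · rw [if_pos h, if_pos (by simpa using h)]
        simp only [hf]; ring
      · rw [if_neg h, if_neg (by simpa using h)]
  -- (d) split strict lower region
  have hd : (∑ p ∈ P, if p.2 < p.1 then f p else 0)
      = (∑ p ∈ P, if p.2 = p.1 - 1 then f p else 0)
        + (∑ p ∈ P, if p.2 ≤ p.1 - 2 then f p else 0) := by
    rw [← Finset.sum_add_distrib]
    refine Finset.sum_congr rfl fun p _ => ?_
    by_cases h1 : p.2 = p.1 - 1
    · rw [if_pos (by omega), if_pos h1, if_neg (by omega), add_zero]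
    · by_cases h2 : p.2 ≤ p.1 - 2
      · rw [if_pos (by omega), if_neg h1, if_pos h2, zero_add]
      · rw [if_neg (by omega), if_neg h1, if_neg h2, add_zero]
  -- (e) diagonal identity
  have he : (∑ p ∈ P, if p.2 = p.1 - 1 then f p else 0)
      = (∑ p ∈ P, if p.1 = p.2 - 1 then g p else 0) := by
    refine Finset.sum_nbij' (fun p : ℤ × ℤ => (p.2, p.1)) (fun p : ℤ × ℤ => (p.2, p.1))
      ?_ ?_ ?_ ?_ ?_
    · intro p hp; rw [hmemP] at hp ⊢; simp only at hp ⊢; omega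
    · intro p hp; rw [hmemP] at hp ⊢; simp only at hp ⊢; omega
    · intro p _; rfl
    · intro p _; rfl
    · intro p _
      by_cases h : p.2 = p.1 - 1
      · rw [if_pos h, if_pos (by simpa using h)]
        simp only [hf, hg]
        rw [h]
        rw [show (n:ℤ) - (p.1 - 1) = (n:ℤ) + 1 - p.1 by ring]
        ring_nf
      · rw [if_neg h, if_neg (by simpa using h)]
  -- (f) swap symmetry for far region of f
  have hfi : (∑ p ∈ P, if p.2 ≤ p.1 - 2 then f p else 0)
      = (∑ p ∈ P, if p.1 ≤ p.2 - 2 then f p else 0) := by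
    refine Finset.sum_nbij' (fun p : ℤ × ℤ => (p.2, p.1)) (fun p : ℤ × ℤ => (p.2, p.1))
      ?_ ?_ ?_ ?_ ?_
    · intro p hp; rw [hmemP] at hp ⊢; simp only at hp ⊢; omega
    · intro p hp; rw [hmemP] at hp ⊢; simp only at hp ⊢; omega
    · intro p _; rfl
    · intro p _; rfl
    · intro p _
      by_cases h : p.2 ≤ p.1 - 2
      · rw [if_pos h, if_pos (by simpa using h)]
        simp only [hf]; ring
      · rw [if_neg h, if_neg (by simpa using h)]
  -- (h) shift identity for pf
  have hh : (∑ p ∈ P, if p.2 ≤ p.1 then pf p else 0)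
      = (∑ p ∈ P, if p.1 ≤ p.2 - 2 then g p else 0) := by
    have step1 : ∀ p ∈ P, (if p.2 ≤ p.1 then pf p else 0)
        = (fun q : ℤ × ℤ => if q.1 ≤ q.2 - 2 then g q else 0) (emb p) := by
      intro p _
      simp only [hemb, Function.Embedding.coeFn_mk]
      by_cases h : p.2 ≤ p.1
      · rw [if_pos h, if_pos (by omega)]
        simp only [hpf, hg]
        rw [show (n:ℤ) - (p.2 - 1) = (n:ℤ) + 1 - p.2 by ring,
          show (n:ℤ) + 2 - (p.1 + 1) = (n:ℤ) + 1 - p.1 by ring]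
        ring
      · rw [if_neg h, if_neg (by omega)]
    refine (Finset.sum_congr rfl step1).trans ?_
    refine ((Finset.sum_map P emb (fun q : ℤ × ℤ => if q.1 ≤ q.2 - 2 then g q else 0)).symm).trans ?_
    apply supp_congr
    intro q hq
    have hgq : g q ≠ 0 := by
      intro h
      apply hq
      simp only [h, ite_self]
    have hb := hgs q hgq
    constructor
    · intro _; rw [hmemP]; omega
    · intro _; exact hmemMap q (by omega)
  -- (i) shift identity for qf
  have hi2 : (∑ p ∈ P, if p.2 ≤ p.1 then qf p else 0)
      = (∑ p ∈ P, if p.1 ≤ p.2 - 2 then f p else 0) := by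
    have step1 : ∀ p ∈ P, (if p.2 ≤ p.1 then qf p else 0)
        = (fun q : ℤ × ℤ => if q.1 ≤ q.2 - 2 then f q else 0) (emb p) := by
      intro p _
      simp only [hemb, Function.Embedding.coeFn_mk]
      by_cases h : p.2 ≤ p.1
      · rw [if_pos h, if_pos (by omega)]
        simp only [hqf, hf]
        rw [show (n:ℤ) + 1 - (p.2 - 1) = (n:ℤ) + 2 - p.2 by ring,
          show (n:ℤ) + 1 - (p.1 + 1) = (n:ℤ) - p.1 by ring]
        ring
      · rw [if_neg h, if_neg (by omega)]
    refine (Finset.sum_congr rfl step1).trans ?_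
    refine ((Finset.sum_map P emb (fun q : ℤ × ℤ => if q.1 ≤ q.2 - 2 then f q else 0)).symm).trans ?_
    apply supp_congr
    intro q hq
    have hfq : f q ≠ 0 := by
      intro h
      apply hq
      simp only [h, ite_self]
    have hb := hfs q hfq
    constructor
    · intro _; rw [hmemP]; omega
    · intro _; exact hmemMap q (by omega)
  -- (g) decomposition of the filtered t-sum
  have hgdec : ∑ p ∈ P.filter (fun p => p.2 ≤ p.1), t p
      = (∑ p ∈ P, if p.2 ≤ p.1 then f p else 0) - (∑ p ∈ P, if p.2 ≤ p.1 then g p else 0)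
        - (∑ p ∈ P, if p.2 ≤ p.1 then pf p else 0)
        + (∑ p ∈ P, if p.2 ≤ p.1 then qf p else 0) := by
    rw [Finset.sum_filter]
    have step : ∀ p ∈ P, (if p.2 ≤ p.1 then t p else 0)
        = (if p.2 ≤ p.1 then f p else 0) - (if p.2 ≤ p.1 then g p else 0)
          - (if p.2 ≤ p.1 then pf p else 0) + (if p.2 ≤ p.1 then qf p else 0) := by
      intro p _
      by_cases h : p.2 ≤ p.1
      · simp only [if_pos h, ht, hf, hg, hpf, hqf]; ring
      · simp only [if_neg h]; ring
    rw [Finset.sum_congr rfl step, Finset.sum_add_distrib, Finset.sum_sub_distrib,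
      Finset.sum_sub_distrib]
  -- positivity of the t-sum
  have hpos : 0 ≤ ∑ p ∈ P.filter (fun p => p.2 ≤ p.1), t p := by
    apply Finset.sum_nonneg
    intro p hp
    rw [Finset.mem_filter] at hp
    have hcond : p.2 ≤ p.1 := hp.2
    have h1 := hGX p.2 p.1 hcond
    have h2 := hGY ((n:ℤ) + 1 - p.1) ((n:ℤ) + 1 - p.2) (by omega)
    rw [show (n:ℤ) + 1 - p.1 - 1 = (n:ℤ) - p.1 by ring,
      show (n:ℤ) + 1 - p.2 + 1 = (n:ℤ) + 2 - p.2 by ring] at h2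
    simp only [ht]
    apply mul_nonneg
    · rw [sub_nonneg]
      calc extSeq x (p.1 + 1) * extSeq x (p.2 - 1)
          = extSeq x (p.2 - 1) * extSeq x (p.1 + 1) := by ring
        _ ≤ extSeq x p.2 * extSeq x p.1 := h1
        _ = extSeq x p.1 * extSeq x p.2 := by ring
    · rw [sub_nonneg]
      exact h2
  -- conclude
  rw [hA, hB]
  linarith [ha, hb, hc, hd, he, hfi, hh, hi2, hgdec, hpos]
end
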